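/- arXiv:1811.12031 — 5 statements merged into one kernel-verified Lean document; each statement's English description precedes it below -/
import Mathlib

section
/- For every integer n ≥ 4, the second largest distance Pareto eigenvalue of the graph S_n⁺ satisfies ρ₂(S_n⁺) = (2n − 7 + √((2n−1)² − 16))/2. -/
open Matrix SimpleGraph

/-- `x` is a (unit-normalizable) Pareto eigenvector of `A` associated with `lam`:
`x` is nonzero, entrywise nonnegative, `A x ≥ lam • x` entrywise, and
`lam = xᵀAx / xᵀx`. -/
def IsParetoEigenpair {n : ℕ} (A : Matrix (Fin n) (Fin n) ℝ) (lam : ℝ) (x : Fin n → ℝ) : Prop :=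
  x ≠ 0 ∧ (∀ i, 0 ≤ x i) ∧ (∀ i, lam * x i ≤ A.mulVec x i) ∧
    lam = (x ⬝ᵥ A.mulVec x) / (x ⬝ᵥ x)

/-- `lam` is a Pareto eigenvalue of `A`. -/
def IsParetoEigenvalue {n : ℕ} (A : Matrix (Fin n) (Fin n) ℝ) (lam : ℝ) : Prop :=
  ∃ x, IsParetoEigenpair A lam x

/-- The distance matrix of a graph on `Fin n`, as a real matrix. -/
noncomputable def distMatrix {n : ℕ} (G : SimpleGraph (Fin n)) : Matrix (Fin n) (Fin n) ℝ :=
  fun i j => (G.dist i j : ℝ)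

/-- The set `Π(G)` of distance Pareto eigenvalues of `G`. -/
def distParetoSet {n : ℕ} (G : SimpleGraph (Fin n)) : Set ℝ :=
  {lam | IsParetoEigenvalue (distMatrix G) lam}

/-- `a` is the `k`-th largest element of the (finite) set `S`. -/
def IsKthLargest (S : Set ℝ) (k : ℕ) (a : ℝ) : Prop :=
  a ∈ S ∧ {x ∈ S | a < x}.ncard = k - 1

/-- `a` is the `k`-th smallest element of the (finite) set `S`. -/
def IsKthSmallest (S : Set ℝ) (k : ℕ) (a : ℝ) : Prop :=
  a ∈ S ∧ {x ∈ S | x < a}.ncard = k - 1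

/-- The star graph `S_n` on `n` vertices: vertex `0` is adjacent to all others. -/
def starGraph (n : ℕ) : SimpleGraph (Fin n) where
  Adj i j := i ≠ j ∧ (i.val = 0 ∨ j.val = 0)
  symm := ⟨fun i j h => ⟨h.1.symm, h.2.symm⟩⟩
  loopless := ⟨fun i h => h.1 rfl⟩

/-- The graph `S_n⁺`: the star `S_n` plus one edge between the pendant vertices `1` and `2`. -/
def starPlusGraph (n : ℕ) : SimpleGraph (Fin n) where
  Adj i j := i ≠ j ∧
    ((i.val = 0 ∨ j.val = 0) ∨ (i.val = 1 ∧ j.val = 2) ∨ (i.val = 2 ∧ j.val = 1))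
  symm := ⟨fun i j h => ⟨h.1.symm, by tauto⟩⟩
  loopless := ⟨fun i h => h.1 rfl⟩

/-- The wheel graph `W_n` on `n` vertices: hub `0` joined to the cycle `1 - 2 - ⋯ - (n-1) - 1`. -/
def wheelGraph (n : ℕ) : SimpleGraph (Fin n) where
  Adj i j := i ≠ j ∧ (i.val = 0 ∨ j.val = 0 ∨
    i.val + 1 = j.val ∨ j.val + 1 = i.val ∨
    (i.val = 1 ∧ j.val = n - 1) ∨ (j.val = 1 ∧ i.val = n - 1))
  symm := ⟨fun i j h => ⟨h.1.symm, by tauto⟩⟩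
  loopless := ⟨fun i h => h.1 rfl⟩

/-- `K₄ - e`: the complete graph on 4 vertices minus the edge `{0,1}`. -/
def k4MinusE : SimpleGraph (Fin 4) where
  Adj i j := i ≠ j ∧ ¬((i.val = 0 ∧ j.val = 1) ∨ (i.val = 1 ∧ j.val = 0))
  symm := ⟨fun i j h => ⟨h.1.symm, by tauto⟩⟩
  loopless := ⟨fun i h => h.1 rfl⟩

/-- `C₃ * C₃`: two triangles `{0,1,2}` and `{0,3,4}` glued at the common vertex `0`. -/
def c3c3Graph : SimpleGraph (Fin 5) where
  Adj i j := i ≠ j ∧ (i.val = 0 ∨ j.val = 0 ∨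
    (i.val ≤ 2 ∧ j.val ≤ 2) ∨ (3 ≤ i.val ∧ 3 ≤ j.val))
  symm := ⟨fun i j h => ⟨h.1.symm, by tauto⟩⟩
  loopless := ⟨fun i h => h.1 rfl⟩

namespace SPAux


/-- explicit distance values for `S_n⁺` -/
noncomputable def dv {n : ℕ} (i j : Fin n) : ℝ :=
  if i = j then 0
  else if i.val = 0 ∨ j.val = 0 ∨ (i.val = 1 ∧ j.val = 2) ∨ (i.val = 2 ∧ j.val = 1) then 1 else 2

lemma dv_nonneg {n : ℕ} (i j : Fin n) : 0 ≤ dv i j := by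
  unfold dv; split_ifs <;> norm_num

lemma dv_offdiag_ge_one {n : ℕ} {i j : Fin n} (h : i ≠ j) : 1 ≤ dv i j := by
  unfold dv; split_ifs with h1 h2
  · exact absurd h1 h
  · norm_num
  · norm_num

lemma adj_iff {n : ℕ} (i j : Fin n) :
    (starPlusGraph n).Adj i j ↔ i ≠ j ∧
      (i.val = 0 ∨ j.val = 0 ∨ (i.val = 1 ∧ j.val = 2) ∨ (i.val = 2 ∧ j.val = 1)) := by
  show (i ≠ j ∧ _) ↔ _
  tauto

lemma dist_eq {n : ℕ} (hn : 4 ≤ n) (i j : Fin n) :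
    ((starPlusGraph n).dist i j : ℝ) = dv i j := by
  have h0 : (0 : ℕ) < n := by omega
  rcases eq_or_ne i j with rfl | hij
  · simp [dv, SimpleGraph.dist_self]
  by_cases hadj : (starPlusGraph n).Adj i j
  · rw [(SimpleGraph.dist_eq_one_iff_adj).mpr hadj]
    have := (adj_iff i j).mp hadj
    unfold dv
    rw [if_neg hij, if_pos this.2]
    norm_num
  · -- distance is 2
    have hi0 : i.val ≠ 0 := by
      intro h; exact hadj ((adj_iff i j).mpr ⟨hij, Or.inl h⟩)
    have hj0 : j.val ≠ 0 := by
      intro h; exact hadj ((adj_iff i j).mpr ⟨hij, Or.inr (Or.inl h)⟩)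
    have a1 : (starPlusGraph n).Adj i ⟨0, h0⟩ := by
      refine (adj_iff _ _).mpr ⟨?_, Or.inr (Or.inl rfl)⟩
      intro h; exact hi0 (by rw [h])
    have a2 : (starPlusGraph n).Adj ⟨0, h0⟩ j := by
      refine (adj_iff _ _).mpr ⟨?_, Or.inl rfl⟩
      intro h; exact hj0 (by rw [← h])
    have w : (starPlusGraph n).Walk i j := .cons a1 (.cons a2 .nil)
    have hle : (starPlusGraph n).dist i j ≤ 2 := by
      have h2 := SimpleGraph.dist_le (SimpleGraph.Walk.cons a1 (SimpleGraph.Walk.cons a2 SimpleGraph.Walk.nil))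
      simpa using h2
    have hne0 : (starPlusGraph n).dist i j ≠ 0 := fun h =>
      hij ((SimpleGraph.Reachable.dist_eq_zero_iff ⟨w⟩).mp h)
    have hne1 : (starPlusGraph n).dist i j ≠ 1 := fun h =>
      hadj (SimpleGraph.dist_eq_one_iff_adj.mp h)
    have : (starPlusGraph n).dist i j = 2 := by omega
    rw [this]
    unfold dv
    rw [if_neg hij, if_neg]
    · norm_num
    · intro h
      exact hadj ((adj_iff i j).mpr ⟨hij, h⟩)

lemma distMatrix_eq {n : ℕ} (hn : 4 ≤ n) :
    distMatrix (starPlusGraph n) = fun i j => dv i j := by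
  funext i j
  exact dist_eq hn i j

lemma dv_self {n : ℕ} (i : Fin n) : dv i i = 0 := if_pos rfl

lemma dv_eq_one {n : ℕ} {i j : Fin n} (hne : i ≠ j)
    (h : i.val = 0 ∨ j.val = 0 ∨ (i.val = 1 ∧ j.val = 2) ∨ (i.val = 2 ∧ j.val = 1)) :
    dv i j = 1 := by unfold dv; rw [if_neg hne, if_pos h]

lemma dv_eq_two {n : ℕ} {i j : Fin n} (hne : i ≠ j)
    (h : ¬(i.val = 0 ∨ j.val = 0 ∨ (i.val = 1 ∧ j.val = 2) ∨ (i.val = 2 ∧ j.val = 1))) :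
    dv i j = 2 := by unfold dv; rw [if_neg hne, if_neg h]

lemma sum_classes {n : ℕ} (hn : 4 ≤ n) (g : Fin n → ℝ) (A B C E : ℝ)
    (h0 : ∀ j : Fin n, j.val = 0 → g j = A) (h1 : ∀ j : Fin n, j.val = 1 → g j = B)
    (h2 : ∀ j : Fin n, j.val = 2 → g j = C) (h3 : ∀ j : Fin n, 3 ≤ j.val → g j = E) :
    ∑ j, g j = A + B + C + ((n:ℝ) - 3) * E := by
  have hn' : 3 < n := by omega
  set j0 : Fin n := ⟨0, by omega⟩ with hj0
  set j1 : Fin n := ⟨1, by omega⟩ with hj1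
  set j2 : Fin n := ⟨2, by omega⟩ with hj2
  have key : ∀ j : Fin n, g j = E + ((if j = j0 then A - E else 0) +
      ((if j = j1 then B - E else 0) + (if j = j2 then C - E else 0))) := by
    intro j
    have c0 : j = j0 ↔ j.val = 0 := by rw [hj0, Fin.ext_iff]
    have c1 : j = j1 ↔ j.val = 1 := by rw [hj1, Fin.ext_iff]
    have c2 : j = j2 ↔ j.val = 2 := by rw [hj2, Fin.ext_iff]
    by_cases e0 : j.val = 0
    · rw [if_pos (c0.mpr e0), if_neg (fun h => by exact absurd (c1.mp h) (by omega)),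
        if_neg (fun h => absurd (c2.mp h) (by omega)), h0 j e0]
      ring
    by_cases e1 : j.val = 1
    · rw [if_neg (fun h => absurd (c0.mp h) (by omega)), if_pos (c1.mpr e1),
        if_neg (fun h => absurd (c2.mp h) (by omega)), h1 j e1]
      ring
    by_cases e2 : j.val = 2
    · rw [if_neg (fun h => absurd (c0.mp h) (by omega)), if_neg (fun h => absurd (c1.mp h) (by omega)),
        if_pos (c2.mpr e2), h2 j e2]
      ring
    · rw [if_neg (fun h => absurd (c0.mp h) (by omega)), if_neg (fun h => absurd (c1.mp h) (by omega)),
        if_neg (fun h => absurd (c2.mp h) (by omega)), h3 j (by omega)]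
      ring
  rw [Finset.sum_congr rfl (fun j _ => key j)]
  rw [Finset.sum_add_distrib, Finset.sum_add_distrib, Finset.sum_add_distrib,
    Finset.sum_const, Finset.sum_ite_eq' Finset.univ j0, Finset.sum_ite_eq' Finset.univ j1,
    Finset.sum_ite_eq' Finset.univ j2]
  simp only [Finset.mem_univ, if_pos, Finset.card_univ, Fintype.card_fin, nsmul_eq_mul]
  ring

section rows
variable {n : ℕ} (hn : 4 ≤ n) (x : Fin n → ℝ) (s t u : ℝ)
  (hx0 : ∀ j : Fin n, j.val = 0 → x j = s) (hx1 : ∀ j : Fin n, j.val = 1 → x j = t)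
  (hx2 : ∀ j : Fin n, j.val = 2 → x j = t) (hx3 : ∀ j : Fin n, 3 ≤ j.val → x j = u)

include hn hx0 hx1 hx2 hx3

omit hx0 in
lemma row0 (i : Fin n) (hi : i.val = 0) :
    ∑ j, dv i j * x j = 2 * t + ((n:ℝ) - 3) * u := by
  have hs := sum_classes hn (fun j => dv i j * x j) 0 t t u ?_ ?_ ?_ ?_
  · rw [hs]; ring
  · intro j hj
    beta_reduce
    have hij : i = j := Fin.ext (by omega)
    rw [← hij, dv_self]; ring
  · intro j hj
    beta_reduce
    rw [dv_eq_one (fun h => by rw [Fin.ext_iff] at h; omega) (Or.inl hi), hx1 j hj]; ring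
  · intro j hj
    beta_reduce
    rw [dv_eq_one (fun h => by rw [Fin.ext_iff] at h; omega) (Or.inl hi), hx2 j hj]; ring
  · intro j hj
    beta_reduce
    rw [dv_eq_one (fun h => by rw [Fin.ext_iff] at h; omega) (Or.inl hi), hx3 j hj]; ring

lemma row12 (i : Fin n) (hi : i.val = 1 ∨ i.val = 2) :
    ∑ j, dv i j * x j = s + t + 2 * ((n:ℝ) - 3) * u := by
  rcases hi with hi | hi
  · have hs := sum_classes hn (fun j => dv i j * x j) s 0 t (2*u) ?_ ?_ ?_ ?_
    · rw [hs]; ring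
    · intro j hj
      beta_reduce
      rw [dv_eq_one (fun h => by rw [Fin.ext_iff] at h; omega) (Or.inr (Or.inl hj)), hx0 j hj]; ring
    · intro j hj
      beta_reduce
      have hij : i = j := Fin.ext (by omega)
      rw [← hij, dv_self]; ring
    · intro j hj
      beta_reduce
      rw [dv_eq_one (fun h => by rw [Fin.ext_iff] at h; omega) (Or.inr (Or.inr (Or.inl ⟨hi, hj⟩))), hx2 j hj]; ring
    · intro j hj
      beta_reduce
      rw [dv_eq_two (fun h => by rw [Fin.ext_iff] at h; omega) (by omega), hx3 j hj]
      try ring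
  · have hs := sum_classes hn (fun j => dv i j * x j) s t 0 (2*u) ?_ ?_ ?_ ?_
    · rw [hs]; ring
    · intro j hj
      beta_reduce
      rw [dv_eq_one (fun h => by rw [Fin.ext_iff] at h; omega) (Or.inr (Or.inl hj)), hx0 j hj]; ring
    · intro j hj
      beta_reduce
      rw [dv_eq_one (fun h => by rw [Fin.ext_iff] at h; omega) (Or.inr (Or.inr (Or.inr ⟨hi, hj⟩))), hx1 j hj]; ring
    · intro j hj
      beta_reduce
      have hij : i = j := Fin.ext (by omega)
      rw [← hij, dv_self]; ring
    · intro j hj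
      beta_reduce
      rw [dv_eq_two (fun h => by rw [Fin.ext_iff] at h; omega) (by omega), hx3 j hj]
      try ring

lemma row3 (i : Fin n) (hi : 3 ≤ i.val) :
    ∑ j, dv i j * x j = s + 4 * t + (2 * (n:ℝ) - 8) * u := by
  have key : ∑ j, (dv i j * x j + (if j = i then 2 * u else 0)) =
      s + 2*t + 2*t + ((n:ℝ) - 3) * (2*u) := by
    have hs := sum_classes hn (fun j => dv i j * x j + (if j = i then 2*u else 0)) s (2*t) (2*t) (2*u) ?_ ?_ ?_ ?_
    · rw [hs]
    · intro j hj
      beta_reduce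
      rw [dv_eq_one (fun h => by rw [Fin.ext_iff] at h; omega) (Or.inr (Or.inl hj)), hx0 j hj,
        if_neg (fun h => by rw [Fin.ext_iff] at h; omega)]; ring
    · intro j hj
      beta_reduce
      rw [dv_eq_two (fun h => by rw [Fin.ext_iff] at h; omega) (by omega), hx1 j hj,
        if_neg (fun h => by rw [Fin.ext_iff] at h; omega)]; ring
    · intro j hj
      beta_reduce
      rw [dv_eq_two (fun h => by rw [Fin.ext_iff] at h; omega) (by omega), hx2 j hj,
        if_neg (fun h => by rw [Fin.ext_iff] at h; omega)]; ring
    · intro j hj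
      beta_reduce
      by_cases hji : j = i
      · rw [if_pos hji, hji, dv_self, hx3 i (by omega)]; ring
      · rw [if_neg hji, dv_eq_two (fun h => hji h.symm) (by omega), hx3 j hj]; ring
  have expand : ∑ j, (dv i j * x j + (if j = i then 2 * u else 0)) =
      (∑ j, dv i j * x j) + 2 * u := by
    rw [Finset.sum_add_distrib, Finset.sum_ite_eq' Finset.univ i]
    simp
  rw [expand] at key
  linarith [key]

end rows

section pareto
variable {n : ℕ}

lemma mulVec_apply (x : Fin n → ℝ) (i : Fin n) :
    Matrix.mulVec (fun i j => dv i j) x i = ∑ j, dv i j * x j := rfl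

lemma pareto_of_stu (hn : 4 ≤ n) (lam s t u : ℝ) (hs : 0 ≤ s) (ht : 0 ≤ t) (hu : 0 < u)
    (h0 : lam * s ≤ 2*t + ((n:ℝ)-3)*u)
    (h0' : s * (2*t + ((n:ℝ)-3)*u) = lam * (s*s))
    (h1 : lam * t = s + t + 2*((n:ℝ)-3)*u)
    (h3 : lam * u = s + 4*t + (2*(n:ℝ)-8)*u) :
    IsParetoEigenvalue (distMatrix (starPlusGraph n)) lam := by
  rw [distMatrix_eq hn]
  set x : Fin n → ℝ := fun i => if i.val = 0 then s else if i.val ≤ 2 then t else u with hxdef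
  have hx0 : ∀ j : Fin n, j.val = 0 → x j = s := fun j hj => by simp [hxdef, hj]
  have hx1 : ∀ j : Fin n, j.val = 1 → x j = t := fun j hj => by simp [hxdef, hj]
  have hx2 : ∀ j : Fin n, j.val = 2 → x j = t := fun j hj => by simp [hxdef, hj]
  have hx3 : ∀ j : Fin n, 3 ≤ j.val → x j = u := fun j hj => by
    simp only [hxdef]
    rw [if_neg (by omega), if_neg (by omega)]
  have i3 : (⟨3, by omega⟩ : Fin n).val = 3 := rfl
  have hmv : ∀ i : Fin n, Matrix.mulVec (fun i j => dv i j) x i = ∑ j, dv i j * x j :=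
    fun i => rfl
  have hrow : ∀ i : Fin n, (i.val = 0 → Matrix.mulVec (fun i j => dv i j) x i = 2*t + ((n:ℝ)-3)*u) ∧
      ((i.val = 1 ∨ i.val = 2) → Matrix.mulVec (fun i j => dv i j) x i = s + t + 2*((n:ℝ)-3)*u) ∧
      (3 ≤ i.val → Matrix.mulVec (fun i j => dv i j) x i = s + 4*t + (2*(n:ℝ)-8)*u) := by
    intro i
    refine ⟨fun hi => ?_, fun hi => ?_, fun hi => ?_⟩
    · rw [hmv, row0 hn x t u hx1 hx2 hx3 i hi]
    · rw [hmv, row12 hn x s t u hx0 hx1 hx2 hx3 i hi]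
    · rw [hmv, row3 hn x s t u hx0 hx1 hx2 hx3 i hi]
  have hxnn : ∀ i, 0 ≤ x i := by
    intro i
    simp only [hxdef]
    split_ifs
    · exact hs
    · exact ht
    · exact hu.le
  have hxval : ∀ i : Fin n, x i * Matrix.mulVec (fun i j => dv i j) x i
      = lam * (x i * x i) := by
    intro i
    rcases Nat.lt_or_ge i.val 3 with h | h
    · interval_cases hv : i.val
      · rw [(hrow i).1 hv, hx0 i hv, h0']
      · rw [(hrow i).2.1 (Or.inl hv), hx1 i hv, ← h1]; ring
      · rw [(hrow i).2.1 (Or.inr hv), hx2 i hv, ← h1]; ring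
    · rw [(hrow i).2.2 h, hx3 i h, ← h3]; ring
  have hne : x ≠ 0 := by
    intro h
    have := congrFun h ⟨3, by omega⟩
    rw [hx3 _ (le_of_eq i3.symm)] at this
    exact absurd this (ne_of_gt hu)
  refine ⟨x, hne, hxnn, ?_, ?_⟩
  · intro i
    rcases Nat.lt_or_ge i.val 3 with h | h
    · interval_cases hv : i.val
      · rw [(hrow i).1 hv, hx0 i hv]; exact h0
      · rw [(hrow i).2.1 (Or.inl hv), hx1 i hv, ← h1]
      · rw [(hrow i).2.1 (Or.inr hv), hx2 i hv, ← h1]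
    · rw [(hrow i).2.2 h, hx3 i h, ← h3]
  · have hnum : x ⬝ᵥ Matrix.mulVec (fun i j => dv i j) x = lam * (x ⬝ᵥ x) := by
      unfold dotProduct
      rw [Finset.mul_sum]
      exact Finset.sum_congr rfl (fun i _ => by rw [hxval i])
    have hden : (0:ℝ) < x ⬝ᵥ x := by
      have hle : x ⟨3, by omega⟩ * x ⟨3, by omega⟩ ≤ x ⬝ᵥ x := by
        apply Finset.single_le_sum (f := fun i => x i * x i)
        · exact fun i _ => mul_nonneg (hxnn i) (hxnn i)
        · exact Finset.mem_univ _
      have : x ⟨3, by omega⟩ = u := hx3 _ (le_of_eq i3.symm)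
      nlinarith
    rw [hnum, mul_div_assoc, div_self (ne_of_gt hden), mul_one]

end pareto

lemma dv_val_eq {n : ℕ} (i j : Fin n) : dv i j =
    if i.val = j.val then 0
    else if i.val = 0 ∨ j.val = 0 ∨ (i.val = 1 ∧ j.val = 2) ∨ (i.val = 2 ∧ j.val = 1) then 1
    else 2 := by
  unfold dv
  simp only [Fin.ext_iff]

section analysis
variable {n : ℕ}

lemma sum_shift (f g c d : Fin n → ℝ) (p q : Fin n)
    (h : ∀ j, f j = g j + (if j = p then c j else 0) - (if j = q then d j else 0)) :
    ∑ j, f j = ∑ j, g j + c p - d q := by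
  rw [Finset.sum_congr rfl (fun j _ => h j), Finset.sum_sub_distrib, Finset.sum_add_distrib,
    Finset.sum_ite_eq' Finset.univ p, Finset.sum_ite_eq' Finset.univ q]
  simp

lemma analysis (hn : 4 ≤ n) (lam : ℝ)
    (hmem : IsParetoEigenvalue (distMatrix (starPlusGraph n)) lam)
    (hbig : 2*(n:ℝ) - 5 < lam) :
    (lam^2 = (2*(n:ℝ)-7)*lam + (6*(n:ℝ)-16)) ∨
    (lam^3 = (2*(n:ℝ)-7)*lam^2 + (7*(n:ℝ)-17)*lam + (3*(n:ℝ)-5)) := by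
  have hnR : (4:ℝ) ≤ (n:ℝ) := by exact_mod_cast hn
  have hlampos : 0 < lam := by linarith
  rw [distMatrix_eq hn] at hmem
  obtain ⟨x, hne, hnn, hineq, hray⟩ := hmem
  have hden : 0 < x ⬝ᵥ x := by
    obtain ⟨j, hj⟩ := Function.ne_iff.mp hne
    have hle : x j * x j ≤ x ⬝ᵥ x := by
      apply Finset.single_le_sum (f := fun i => x i * x i)
      · exact fun i _ => mul_nonneg (hnn i) (hnn i)
      · exact Finset.mem_univ _
    have hj0 : x j ≠ 0 := by simpa using hj
    have hjpos : 0 < x j := lt_of_le_of_ne (hnn j) (Ne.symm hj0)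
    nlinarith
  have hsum : x ⬝ᵥ Matrix.mulVec (fun i j => dv i j) x = lam * (x ⬝ᵥ x) := by
    rw [hray]; field_simp
  have h0 : ∑ i, x i * (Matrix.mulVec (fun i j => dv i j) x i - lam * x i) = 0 := by
    have he : ∀ i : Fin n, x i * (Matrix.mulVec (fun i j => dv i j) x i - lam * x i) =
        x i * Matrix.mulVec (fun i j => dv i j) x i - lam * (x i * x i) := fun i => by ring
    rw [Finset.sum_congr rfl (fun i _ => he i), Finset.sum_sub_distrib]
    have e1 : ∑ i, x i * Matrix.mulVec (fun i j => dv i j) x i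
        = x ⬝ᵥ Matrix.mulVec (fun i j => dv i j) x := rfl
    have e2 : ∑ i, lam * (x i * x i) = lam * (x ⬝ᵥ x) := by
      rw [← Finset.mul_sum]; rfl
    rw [e1, e2, hsum, sub_self]
  have hsupp : ∀ i : Fin n, x i ≠ 0 → ∑ j, dv i j * x j = lam * x i := by
    intro i hxi
    have hterm : ∀ j ∈ Finset.univ, (0:ℝ) ≤ x j * (Matrix.mulVec (fun i j => dv i j) x j - lam * x j) :=
      fun j _ => mul_nonneg (hnn j) (sub_nonneg.mpr (hineq j))
    have := (Finset.sum_eq_zero_iff_of_nonneg hterm).mp h0 i (Finset.mem_univ i)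
    have hz : Matrix.mulVec (fun i j => dv i j) x i - lam * x i = 0 := by
      rcases mul_eq_zero.mp this with h | h
      · exact absurd h hxi
      · exact h
    have : Matrix.mulVec (fun i j => dv i j) x i = lam * x i := by linarith
    rw [← this]
    exact (mulVec_apply x i).symm
  by_cases hA : ∃ k : Fin n, 1 ≤ k.val ∧ x k = 0
  · exfalso
    obtain ⟨k, hk1, hk0⟩ := hA
    obtain ⟨i, _, hmax⟩ := Finset.exists_max_image Finset.univ x ⟨k, Finset.mem_univ k⟩
    have hxi : 0 < x i := by
      obtain ⟨j, hj⟩ := Function.ne_iff.mp hne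
      have hj0 : x j ≠ 0 := by simpa using hj
      exact lt_of_lt_of_le (lt_of_le_of_ne (hnn j) (Ne.symm hj0)) (hmax j (Finset.mem_univ j))
    have hik : i ≠ k := fun h => by rw [h, hk0] at hxi; exact lt_irrefl 0 hxi
    have heq : ∑ j, dv i j * x j = lam * x i := hsupp i (ne_of_gt hxi)
    have hb1 : ∑ j, dv i j * x j ≤ ∑ j ∈ Finset.univ.erase k, dv i j * x i := by
      rw [← Finset.add_sum_erase Finset.univ _ (Finset.mem_univ k), hk0, mul_zero, zero_add]
      exact Finset.sum_le_sum (fun j _ => mul_le_mul_of_nonneg_left (hmax j (Finset.mem_univ j)) (dv_nonneg i j))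
    have hsplit : dv i k + ∑ j ∈ Finset.univ.erase k, dv i j = ∑ j, dv i j :=
      Finset.add_sum_erase _ _ (Finset.mem_univ k)
    have hb2 : ∑ j ∈ Finset.univ.erase k, dv i j * x i = (∑ j, dv i j) * x i - dv i k * x i := by
      rw [← Finset.sum_mul, ← hsplit]
      ring
    have hrs : (i.val = 0 → ∑ j, dv i j = (n:ℝ) - 1) ∧
        ((i.val = 1 ∨ i.val = 2) → ∑ j, dv i j = 2*(n:ℝ) - 4) ∧
        (3 ≤ i.val → ∑ j, dv i j = 2*(n:ℝ) - 3) := by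
      have hconv : ∑ j, dv i j = ∑ j, dv i j * (fun _ : Fin n => (1:ℝ)) j :=
        Finset.sum_congr rfl (fun j _ => by simp)
      refine ⟨fun hv => ?_, fun hv => ?_, fun hv => ?_⟩
      · rw [hconv, row0 hn _ 1 1 (fun j _ => rfl) (fun j _ => rfl) (fun j _ => rfl) i hv]; ring
      · rw [hconv, row12 hn _ 1 1 1 (fun j _ => rfl) (fun j _ => rfl) (fun j _ => rfl) (fun j _ => rfl) i hv]; ring
      · rw [hconv, row3 hn _ 1 1 1 (fun j _ => rfl) (fun j _ => rfl) (fun j _ => rfl) (fun j _ => rfl) i hv]; ring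
    have hdvk : (∑ j, dv i j) - dv i k ≤ 2*(n:ℝ) - 5 := by
      have h1 : 1 ≤ dv i k := dv_offdiag_ge_one hik
      rcases Nat.lt_or_ge i.val 3 with h | h
      · rcases Nat.eq_zero_or_pos i.val with h0v | h0v
        · rw [hrs.1 h0v]; linarith
        · rw [hrs.2.1 (by omega)]; linarith
      · have h2 : dv i k = 2 := by
          apply dv_eq_two hik
          push_neg
          refine ⟨by omega, by omega, ?_, ?_⟩ <;> intro hh <;> omega
        rw [hrs.2.2 h]; linarith
    have : lam * x i ≤ (2*(n:ℝ) - 5) * x i := by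
      calc lam * x i = ∑ j, dv i j * x j := heq.symm
      _ ≤ (∑ j, dv i j) * x i - dv i k * x i := le_of_le_of_eq hb1 hb2
      _ = ((∑ j, dv i j) - dv i k) * x i := by ring
      _ ≤ (2*(n:ℝ) - 5) * x i := mul_le_mul_of_nonneg_right hdvk (le_of_lt hxi)
    nlinarith
  · push_neg at hA
    have hpos : ∀ k : Fin n, 1 ≤ k.val → 0 < x k :=
      fun k hk => lt_of_le_of_ne (hnn k) (Ne.symm (hA k hk))
    have h1n : 1 < n := by omega
    have h2n : 2 < n := by omega
    have h3n : 3 < n := by omega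
    have h0n : 0 < n := by omega
    set s := x ⟨0, h0n⟩ with hs
    set t := x ⟨1, h1n⟩ with ht
    set u := x ⟨3, h3n⟩ with hu
    have htpos : 0 < t := hpos _ (by norm_num)
    have hupos : 0 < u := hpos _ (by norm_num)
    have hx2t : x ⟨2, h2n⟩ = t := by
      have hdiff : ∑ j, dv (⟨1, h1n⟩ : Fin n) j * x j
          = ∑ j, dv (⟨2, h2n⟩ : Fin n) j * x j + x ⟨2, h2n⟩ - x ⟨1, h1n⟩ := by
        apply sum_shift (fun j => dv (⟨1, h1n⟩ : Fin n) j * x j)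
          (fun j => dv (⟨2, h2n⟩ : Fin n) j * x j) x x ⟨2, h2n⟩ ⟨1, h1n⟩
        intro j
        beta_reduce
        rw [dv_val_eq, dv_val_eq]
        simp only [Fin.ext_iff, Fin.val_mk,
          show ((⟨1, h1n⟩ : Fin n)).val = 1 from rfl, show ((⟨2, h2n⟩ : Fin n)).val = 2 from rfl,
          true_and, and_true, false_and, and_false, false_or, or_false, true_or, or_true]
        split_ifs <;> first | ring1 | (exfalso; omega) | (exfalso; casesm* _ ∨ _, _ ∧ _, False <;> omega)
      rw [hsupp _ (ne_of_gt htpos), hsupp _ (ne_of_gt (hpos _ (by norm_num)))] at hdiff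
      have hfac : (lam + 1) * (x (⟨1, h1n⟩ : Fin n) - x ⟨2, h2n⟩) = 0 := by
        linear_combination hdiff
      rcases mul_eq_zero.mp hfac with h | h
      · linarith
      · linarith [ht, h]
    have hx3u : ∀ p : Fin n, 3 ≤ p.val → x p = u := by
      intro p hp
      by_cases hp3 : p = ⟨3, h3n⟩
      · rw [hp3, ← hu]
      have hpv : p.val ≠ 3 := fun hh => hp3 (Fin.ext hh)
      have hdiff : ∑ j, dv p j * x j
          = ∑ j, dv (⟨3, h3n⟩ : Fin n) j * x j + 2 * x ⟨3, h3n⟩ - 2 * x p := by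
        apply sum_shift (fun j => dv p j * x j) (fun j => dv (⟨3, h3n⟩ : Fin n) j * x j)
          (fun j => 2 * x j) (fun j => 2 * x j) ⟨3, h3n⟩ p
        intro j
        beta_reduce
        rw [dv_val_eq, dv_val_eq]
        simp only [Fin.ext_iff, Fin.val_mk,
          show ((⟨3, h3n⟩ : Fin n)).val = 3 from rfl,
          true_and, and_true, false_and, and_false, false_or, or_false, true_or, or_true]
        split_ifs <;> first | ring1 | (exfalso; omega) | (exfalso; casesm* _ ∨ _, _ ∧ _, False <;> omega)
      rw [hsupp _ (ne_of_gt (hpos _ (by omega))), hsupp _ (ne_of_gt hupos)] at hdiff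
      have hfac : (lam + 2) * (x p - x (⟨3, h3n⟩ : Fin n)) = 0 := by
        linear_combination hdiff
      rcases mul_eq_zero.mp hfac with h | h
      · linarith
      · linarith [hu, h]
    have hpx0 : ∀ j : Fin n, j.val = 0 → x j = s := fun j hj => by
      rw [hs, (Fin.ext hj : j = ⟨0, h0n⟩)]
    have hpx1 : ∀ j : Fin n, j.val = 1 → x j = t := fun j hj => by
      rw [ht, (Fin.ext hj : j = ⟨1, h1n⟩)]
    have hpx2 : ∀ j : Fin n, j.val = 2 → x j = t := fun j hj => by
      rw [(Fin.ext hj : j = ⟨2, h2n⟩), hx2t]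
    have e1 : lam * t = s + t + 2*((n:ℝ)-3)*u := by
      rw [ht, ← hsupp _ (ne_of_gt htpos),
        row12 hn x s t u hpx0 hpx1 hpx2 hx3u ⟨1, h1n⟩ (Or.inl rfl)]
    have e3 : lam * u = s + 4*t + (2*(n:ℝ)-8)*u := by
      rw [hu, ← hsupp _ (ne_of_gt hupos),
        row3 hn x s t u hpx0 hpx1 hpx2 hx3u ⟨3, h3n⟩ (by norm_num)]
    by_cases hs0 : s = 0
    · left
      rw [hs0] at e1 e3
      have hfac : (lam^2 - (2*(n:ℝ)-7)*lam - (6*(n:ℝ)-16)) * u = 0 := by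
        linear_combination (lam - 1) * e3 + 4 * e1
      rcases mul_eq_zero.mp hfac with h | h
      · nlinarith [h]
      · exact absurd h (ne_of_gt hupos)
    · right
      have e0 : lam * s = 2*t + ((n:ℝ)-3)*u := by
        rw [hs, ← hsupp _ hs0, row0 hn x t u hpx1 hpx2 hx3u ⟨0, h0n⟩ rfl]
      have hfac : (lam^3 - (2*(n:ℝ)-7)*lam^2 - (7*(n:ℝ)-17)*lam - (3*(n:ℝ)-5)) * u = 0 := by
        linear_combination (lam+3) * lam * e1 + (lam+3) * e0 - (lam^2 - lam - 2) * e1 + (lam^2 - lam - 2) * e3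
      rcases mul_eq_zero.mp hfac with h | h
      · nlinarith [h]
      · exact absurd h (ne_of_gt hupos)

end analysis

end SPAux

set_option maxHeartbeats 1000000 in
theorem stmt0 (n : ℕ) (hn : 4 ≤ n) :
    IsKthLargest (distParetoSet (starPlusGraph n)) 2
      ((2 * (n : ℝ) - 7 + Real.sqrt ((2 * (n : ℝ) - 1) ^ 2 - 16)) / 2) := by
  have hnR : (4:ℝ) ≤ (n:ℝ) := by exact_mod_cast hn
  set a : ℝ := (2 * (n : ℝ) - 7 + Real.sqrt ((2 * (n : ℝ) - 1) ^ 2 - 16)) / 2 with ha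
  have hd0 : (0:ℝ) ≤ (2 * (n:ℝ) - 1) ^ 2 - 16 := by nlinarith [sq_nonneg ((n:ℝ)-4)]
  have hsqnn : 0 ≤ Real.sqrt ((2 * (n:ℝ) - 1) ^ 2 - 16) := Real.sqrt_nonneg _
  have hsq : Real.sqrt ((2 * (n:ℝ) - 1) ^ 2 - 16) ^ 2 = (2 * (n:ℝ) - 1) ^ 2 - 16 :=
    Real.sq_sqrt hd0
  have hsqlb : 2 * (n:ℝ) - 3 < Real.sqrt ((2 * (n:ℝ) - 1) ^ 2 - 16) := by
    nlinarith [hsq, hsqnn, sq_nonneg (Real.sqrt ((2 * (n:ℝ) - 1) ^ 2 - 16) - (2*(n:ℝ)-3)),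
      mul_nonneg hsqnn (by linarith : (0:ℝ) ≤ 2*(n:ℝ)-3)]
  have hsqub : Real.sqrt ((2 * (n:ℝ) - 1) ^ 2 - 16) < 2 * (n:ℝ) - 1 := by
    nlinarith [hsq, hsqnn, sq_nonneg (Real.sqrt ((2 * (n:ℝ) - 1) ^ 2 - 16) - (2*(n:ℝ)-1)),
      mul_nonneg hsqnn (by linarith : (0:ℝ) ≤ 2*(n:ℝ)-1)]
  have hqa : a^2 = (2*(n:ℝ)-7)*a + (6*(n:ℝ)-16) := by
    have h2 : (2*a - (2*(n:ℝ)-7))^2 = (2 * (n:ℝ) - 1) ^ 2 - 16 := by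
      rw [ha]
      have he : 2 * ((2 * (n : ℝ) - 7 + Real.sqrt ((2 * (n : ℝ) - 1) ^ 2 - 16)) / 2)
          - (2*(n:ℝ)-7) = Real.sqrt ((2 * (n : ℝ) - 1) ^ 2 - 16) := by ring
      rw [he, hsq]
    linear_combination (1/4 : ℝ) * h2
  have haLB : 2*(n:ℝ) - 5 < a := by rw [ha]; linarith
  have haUB : a < 2*(n:ℝ) - 4 := by rw [ha]; linarith
  have hPle : (2*(n:ℝ)-4) ≤ (2*(n:ℝ)-3) := by linarith
  have hcont : ContinuousOn (fun z : ℝ => z^3 - (2*(n:ℝ)-7)*z^2 - (7*(n:ℝ)-17)*z - (3*(n:ℝ)-5))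
      (Set.Icc (2*(n:ℝ)-4) (2*(n:ℝ)-3)) := by
    apply Continuous.continuousOn
    continuity
  have hmem0 : (0:ℝ) ∈ Set.Icc
      ((fun z : ℝ => z^3 - (2*(n:ℝ)-7)*z^2 - (7*(n:ℝ)-17)*z - (3*(n:ℝ)-5)) (2*(n:ℝ)-4))
      ((fun z : ℝ => z^3 - (2*(n:ℝ)-7)*z^2 - (7*(n:ℝ)-17)*z - (3*(n:ℝ)-5)) (2*(n:ℝ)-3)) := by
    constructor
    · beta_reduce
      nlinarith [hnR, sq_nonneg ((n:ℝ)-4), mul_nonneg (by linarith : (0:ℝ) ≤ 2*(n:ℝ)-5)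
        (by linarith : (0:ℝ) ≤ (n:ℝ)-3)]
    · beta_reduce
      nlinarith [hnR, sq_nonneg ((n:ℝ)-4)]
  obtain ⟨c, hcmem, hcz⟩ := intermediate_value_Icc hPle hcont hmem0
  have hcz' : c^3 - (2*(n:ℝ)-7)*c^2 - (7*(n:ℝ)-17)*c - (3*(n:ℝ)-5) = 0 := hcz
  have hcl : 2*(n:ℝ)-4 ≤ c := hcmem.1
  have hcu : c ≤ 2*(n:ℝ)-3 := hcmem.2
  have hcgta : a < c := lt_of_lt_of_le haUB hcl
  have hcpos : (0:ℝ) < c := by linarith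
  have hcPi : IsParetoEigenvalue (distMatrix (starPlusGraph n)) c := by
    apply SPAux.pareto_of_stu hn c (2*(c+2) + ((n:ℝ)-3)*(c+3)) (c*(c+2)) (c*(c+3))
    · have := mul_nonneg (by linarith : (0:ℝ) ≤ (n:ℝ)-3) (by linarith : (0:ℝ) ≤ c+3)
      linarith
    · nlinarith [hcpos]
    · exact mul_pos hcpos (by linarith)
    · apply le_of_eq
      ring
    · ring
    · linear_combination hcz'
    · linear_combination hcz'
  have haPi : IsParetoEigenvalue (distMatrix (starPlusGraph n)) a := by
    apply SPAux.pareto_of_stu hn a 0 (2*((n:ℝ)-3)) (a-1)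
    · exact le_refl 0
    · linarith
    · linarith
    · have h1' : (0:ℝ) ≤ ((n:ℝ)-3)*(a-1) := mul_nonneg (by linarith) (by linarith)
      rw [mul_zero]
      linarith
    · ring
    · ring
    · linear_combination hqa
  constructor
  · exact haPi
  · have hset : {x ∈ distParetoSet (starPlusGraph n) | a < x} = {c} := by
      ext z
      constructor
      · rintro ⟨hzPi, hza⟩
        have hzbig : 2*(n:ℝ) - 5 < z := by linarith
        rcases SPAux.analysis hn z hzPi hzbig with hq | hp
        · exfalso
          have hfacq : (z - a) * (z + a - (2*(n:ℝ)-7)) = 0 := by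
            linear_combination hq - hqa
          have hgt : 0 < (z - a) * (z + a - (2*(n:ℝ)-7)) :=
            mul_pos (by linarith) (by linarith)
          exact absurd hfacq (ne_of_gt hgt)
        · have hfac : (z - c) * (z^2 + z*c + c^2 - (2*(n:ℝ)-7)*(z+c) - (7*(n:ℝ)-17)) = 0 := by
            linear_combination hp - hcz'
          have hZ : 0 < z - (2*(n:ℝ)-5) := by linarith
          have hC : 0 < c - (2*(n:ℝ)-5) := by linarith
          have hpos2 : 0 < z^2 + z*c + c^2 - (2*(n:ℝ)-7)*(z+c) - (7*(n:ℝ)-17) := by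
            nlinarith [mul_pos hZ hC, sq_nonneg (z-(2*(n:ℝ)-5)), sq_nonneg (c-(2*(n:ℝ)-5)),
              sq_nonneg ((n:ℝ)-4), mul_nonneg hZ.le (by linarith : (0:ℝ) ≤ 4*(n:ℝ)-8),
              mul_nonneg hC.le (by linarith : (0:ℝ) ≤ 4*(n:ℝ)-8), hnR]
          have hzc : z - c = 0 := by
            rcases mul_eq_zero.mp hfac with h | h
            · exact h
            · exact absurd h (ne_of_gt hpos2)
          have : z = c := by linarith
          exact this
      · rintro rfl
        exact ⟨hcPi, hcgta⟩
    rw [hset, Set.ncard_singleton]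
end

section
/- For every integer n ≥ 5, the second largest distance Pareto eigenvalue of the wheel graph W_n satisfies ρ₂(W_n) = 2(n − 3). -/
open Matrix SimpleGraph

section WheelAux

open Finset

variable {n : ℕ}

private lemma wheel_adj_hub (hn : 5 ≤ n) {z j : Fin n} (hz : z.val = 0) (hj : j ≠ z) :
    (wheelGraph n).Adj z j := ⟨fun h => hj h.symm, Or.inl hz⟩

private lemma wheel_dist_self (i : Fin n) : distMatrix (wheelGraph n) i i = 0 := by
  simp [distMatrix]

private lemma wheel_dist_adj {i j : Fin n} (h : (wheelGraph n).Adj i j) :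
    distMatrix (wheelGraph n) i j = 1 := by
  simp [distMatrix, SimpleGraph.dist_eq_one_iff_adj.mpr h]

private lemma wheel_dist_nonadj (hn : 5 ≤ n) {i j : Fin n} (hij : i ≠ j)
    (hadj : ¬ (wheelGraph n).Adj i j) : distMatrix (wheelGraph n) i j = 2 := by
  have hi0 : i.val ≠ 0 := fun h => hadj ⟨hij, Or.inl h⟩
  have hj0 : j.val ≠ 0 := fun h => hadj ⟨hij, Or.inr (Or.inl h)⟩
  have h1 : (wheelGraph n).Adj i (⟨0, by omega⟩ : Fin n) :=
    ⟨Fin.ne_of_val_ne (by simpa using hi0), Or.inr (Or.inl rfl)⟩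
  have h2 : (wheelGraph n).Adj (⟨0, by omega⟩ : Fin n) j :=
    ⟨Fin.ne_of_val_ne (by simpa using fun h => hj0 h.symm), Or.inl rfl⟩
  have hle := SimpleGraph.dist_le (SimpleGraph.Walk.cons h1 (SimpleGraph.Walk.cons h2 SimpleGraph.Walk.nil))
  simp only [SimpleGraph.Walk.length_cons, SimpleGraph.Walk.length_nil] at hle
  have hne0 : 0 < (wheelGraph n).dist i j :=
    (SimpleGraph.Walk.cons h1 (SimpleGraph.Walk.cons h2 SimpleGraph.Walk.nil)).reachable.pos_dist_of_ne hij
  have hne1 : (wheelGraph n).dist i j ≠ 1 := fun h =>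
    hadj (SimpleGraph.dist_eq_one_iff_adj.mp h)
  have : (wheelGraph n).dist i j = 2 := by omega
  simp [distMatrix, this]

private lemma wheel_dist_nonneg (i j : Fin n) : 0 ≤ distMatrix (wheelGraph n) i j := by
  simp [distMatrix]

private lemma wheel_dist_le_two (hn : 5 ≤ n) (i j : Fin n) :
    distMatrix (wheelGraph n) i j ≤ 2 := by
  by_cases h1 : i = j
  · rw [h1, wheel_dist_self]; norm_num
  by_cases h2 : (wheelGraph n).Adj i j
  · rw [wheel_dist_adj h2]; norm_num
  · rw [wheel_dist_nonadj hn h1 h2]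


private def nxt (hn : 5 ≤ n) (i : Fin n) : Fin n :=
  ⟨if i.val = n - 1 then 1 else i.val + 1, by have := i.isLt; split <;> omega⟩

private def prv (hn : 5 ≤ n) (i : Fin n) : Fin n :=
  ⟨if i.val = 1 then n - 1 else i.val - 1, by have := i.isLt; split <;> omega⟩

private lemma nxt_val (hn : 5 ≤ n) (i : Fin n) :
    (nxt hn i).val = if i.val = n - 1 then 1 else i.val + 1 := rfl

private lemma prv_val (hn : 5 ≤ n) (i : Fin n) :
    (prv hn i).val = if i.val = 1 then n - 1 else i.val - 1 := rfl

private lemma nxt_val_ne_zero (hn : 5 ≤ n) {i : Fin n} (hi : i.val ≠ 0) :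
    (nxt hn i).val ≠ 0 := by
  rw [nxt_val]; have := i.isLt; split <;> omega

private lemma prv_val_ne_zero (hn : 5 ≤ n) {i : Fin n} (hi : i.val ≠ 0) :
    (prv hn i).val ≠ 0 := by
  rw [prv_val]; have := i.isLt; split <;> omega

private lemma nxt_ne_self (hn : 5 ≤ n) {i : Fin n} (hi : i.val ≠ 0) : nxt hn i ≠ i := by
  apply Fin.ne_of_val_ne; rw [nxt_val]; have := i.isLt; split <;> omega

private lemma prv_ne_self (hn : 5 ≤ n) {i : Fin n} (hi : i.val ≠ 0) : prv hn i ≠ i := by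
  apply Fin.ne_of_val_ne; rw [prv_val]; have := i.isLt; split <;> omega

private lemma nxt_ne_prv (hn : 5 ≤ n) {i : Fin n} (hi : i.val ≠ 0) : nxt hn i ≠ prv hn i := by
  apply Fin.ne_of_val_ne; rw [nxt_val, prv_val]; have := i.isLt; split <;> split <;> omega

private lemma adj_nxt (hn : 5 ≤ n) {i : Fin n} (hi : i.val ≠ 0) :
    (wheelGraph n).Adj i (nxt hn i) := by
  refine ⟨(nxt_ne_self hn hi).symm, ?_⟩
  have hlt := i.isLt
  by_cases h : i.val = n - 1
  · exact Or.inr (Or.inr (Or.inr (Or.inr (Or.inr ⟨by rw [nxt_val]; simp [h], h⟩))))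
  · exact Or.inr (Or.inr (Or.inl (by rw [nxt_val]; simp [h])))

private lemma adj_prv (hn : 5 ≤ n) {i : Fin n} (hi : i.val ≠ 0) :
    (wheelGraph n).Adj i (prv hn i) := by
  refine ⟨(prv_ne_self hn hi).symm, ?_⟩
  have hlt := i.isLt
  by_cases h : i.val = 1
  · exact Or.inr (Or.inr (Or.inr (Or.inr (Or.inl ⟨h, by rw [prv_val]; simp [h]⟩))))
  · exact Or.inr (Or.inr (Or.inr (Or.inl (by rw [prv_val]; simp [h]; omega))))

private lemma wheel_nonadj (hn : 5 ≤ n) {i j : Fin n} (hi : i.val ≠ 0) (hj : j.val ≠ 0)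
    (h1 : j ≠ i) (h2 : j ≠ nxt hn i) (h3 : j ≠ prv hn i) : ¬ (wheelGraph n).Adj i j := by
  intro hadj
  have hv2 : j.val ≠ (nxt hn i).val := fun h => h2 (Fin.ext h)
  have hv3 : j.val ≠ (prv hn i).val := fun h => h3 (Fin.ext h)
  rw [nxt_val] at hv2; rw [prv_val] at hv3
  have hlt := i.isLt; have hlt2 := j.isLt
  obtain ⟨-, hd⟩ := hadj
  split_ifs at hv2 hv3 <;> omega

private lemma sum3 {s : Finset (Fin n)} {f : Fin n → ℝ} {a b c : Fin n}
    (ha : a ∈ s) (hb : b ∈ s) (hc : c ∈ s) (hab : a ≠ b) (hac : a ≠ c) (hbc : b ≠ c) :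
    ∑ j ∈ s, f j = f a + f b + f c + ∑ j ∈ ((s.erase a).erase b).erase c, f j := by
  rw [← Finset.add_sum_erase s f ha,
      ← Finset.add_sum_erase (s.erase a) f (Finset.mem_erase.mpr ⟨hab.symm, hb⟩),
      ← Finset.add_sum_erase ((s.erase a).erase b) f
        (Finset.mem_erase.mpr ⟨hbc.symm, Finset.mem_erase.mpr ⟨hac.symm, hc⟩⟩)]
  ring

private lemma card3 {s : Finset (Fin n)} {a b c : Fin n}
    (ha : a ∈ s) (hb : b ∈ s) (hc : c ∈ s) (hab : a ≠ b) (hac : a ≠ c) (hbc : b ≠ c) :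
    (((s.erase a).erase b).erase c).card = s.card - 3 := by
  rw [Finset.card_erase_of_mem (Finset.mem_erase.mpr ⟨hbc.symm,
        Finset.mem_erase.mpr ⟨hac.symm, hc⟩⟩),
      Finset.card_erase_of_mem (Finset.mem_erase.mpr ⟨hab.symm, hb⟩),
      Finset.card_erase_of_mem ha]
  omega

private lemma rim_sum (hn : 5 ≤ n) {z i : Fin n} (hz : z.val = 0) (hi : i.val ≠ 0) :
    ∑ j ∈ Finset.univ.erase z, distMatrix (wheelGraph n) i j = 2 * (n : ℝ) - 6 := by
  have hmem : ∀ w : Fin n, w.val ≠ 0 → w ∈ Finset.univ.erase z := fun w hw =>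
    Finset.mem_erase.mpr ⟨fun h => hw (by rw [h, hz]), Finset.mem_univ w⟩
  have hin : i ∈ Finset.univ.erase z := hmem i hi
  have hinx : nxt hn i ∈ Finset.univ.erase z := hmem _ (nxt_val_ne_zero hn hi)
  have hinp : prv hn i ∈ Finset.univ.erase z := hmem _ (prv_val_ne_zero hn hi)
  rw [sum3 hin hinx hinp (nxt_ne_self hn hi).symm (prv_ne_self hn hi).symm (nxt_ne_prv hn hi)]
  have hrest : ∀ j ∈ (((Finset.univ.erase z).erase i).erase (nxt hn i)).erase (prv hn i),
      distMatrix (wheelGraph n) i j = 2 := by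
    intro j hj
    simp only [Finset.mem_erase] at hj
    obtain ⟨hj3, hj2, hj1, hjz, -⟩ := hj
    have hj0 : j.val ≠ 0 := fun h => hjz (Fin.ext (by rw [h, hz]))
    exact wheel_dist_nonadj hn (fun h => hj1 h.symm)
      (wheel_nonadj hn hi hj0 hj1 hj2 hj3)
  rw [Finset.sum_congr rfl hrest, Finset.sum_const,
      card3 hin hinx hinp (nxt_ne_self hn hi).symm (prv_ne_self hn hi).symm (nxt_ne_prv hn hi),
      Finset.card_erase_of_mem (Finset.mem_univ z), Finset.card_univ, Fintype.card_fin,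
      wheel_dist_self, wheel_dist_adj (adj_nxt hn hi), wheel_dist_adj (adj_prv hn hi)]
  have h4 : ((n - 1 - 3 : ℕ) : ℝ) = (n : ℝ) - 4 := by
    rw [show n - 1 - 3 = n - 4 from by omega, Nat.cast_sub (by omega)]; norm_num
  rw [nsmul_eq_mul, h4]; ring

private lemma row_bound_aux (hn : 5 ≤ n) {i v w₁ w₂ : Fin n} (hiv : i ≠ v)
    (h1 : w₁ ≠ i) (h2 : w₂ ≠ i) (h12 : w₁ ≠ w₂) (hv1 : w₁ ≠ v) (hv2 : w₂ ≠ v)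
    (ha1 : distMatrix (wheelGraph n) i w₁ ≤ 1) (ha2 : distMatrix (wheelGraph n) i w₂ ≤ 1) :
    ∑ j ∈ Finset.univ.erase v, distMatrix (wheelGraph n) i j ≤ 2 * (n : ℝ) - 6 := by
  have hin : i ∈ Finset.univ.erase v := Finset.mem_erase.mpr ⟨hiv, Finset.mem_univ i⟩
  have hw1 : w₁ ∈ Finset.univ.erase v := Finset.mem_erase.mpr ⟨hv1, Finset.mem_univ w₁⟩
  have hw2 : w₂ ∈ Finset.univ.erase v := Finset.mem_erase.mpr ⟨hv2, Finset.mem_univ w₂⟩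
  rw [sum3 hin hw1 hw2 h1.symm h2.symm h12]
  have hc : ((((Finset.univ.erase v).erase i).erase w₁).erase w₂).card = n - 1 - 3 := by
    rw [card3 hin hw1 hw2 h1.symm h2.symm h12,
      Finset.card_erase_of_mem (Finset.mem_univ v), Finset.card_univ, Fintype.card_fin]
  have hrest := Finset.sum_le_card_nsmul ((((Finset.univ.erase v).erase i).erase w₁).erase w₂)
    (fun j => distMatrix (wheelGraph n) i j) 2 (fun j _ => wheel_dist_le_two hn i j)
  rw [hc, nsmul_eq_mul] at hrest
  have h4 : ((n - 1 - 3 : ℕ) : ℝ) = (n : ℝ) - 4 := by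
    rw [show n - 1 - 3 = n - 4 from by omega, Nat.cast_sub (by omega)]; norm_num
  rw [h4] at hrest
  rw [wheel_dist_self]
  linarith

private lemma row_bound (hn : 5 ≤ n) {i v : Fin n} (hiv : i ≠ v) :
    ∑ j ∈ Finset.univ.erase v, distMatrix (wheelGraph n) i j ≤ 2 * (n : ℝ) - 6 := by
  by_cases hi : i.val = 0
  · have hle : ∀ j ∈ Finset.univ.erase v, distMatrix (wheelGraph n) i j ≤ 1 := by
      intro j hj
      by_cases h : j = i
      · rw [h, wheel_dist_self]; norm_num
      · rw [wheel_dist_adj (wheel_adj_hub hn hi h)]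
    calc ∑ j ∈ Finset.univ.erase v, distMatrix (wheelGraph n) i j
        ≤ (Finset.univ.erase v).card • (1:ℝ) := Finset.sum_le_card_nsmul _ _ _ hle
      _ ≤ 2 * (n:ℝ) - 6 := by
          rw [Finset.card_erase_of_mem (Finset.mem_univ v), Finset.card_univ, Fintype.card_fin,
            nsmul_eq_mul, mul_one]
          have h4 : ((n - 1 : ℕ) : ℝ) = (n : ℝ) - 1 := by
            rw [Nat.cast_sub (by omega)]; norm_num
          rw [h4]
          have : (5:ℝ) ≤ (n:ℝ) := by exact_mod_cast hn
          linarith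
  · have hz : ((⟨0, by omega⟩ : Fin n)).val = 0 := rfl
    set z : Fin n := ⟨0, by omega⟩ with hzdef
    have hadjz : (wheelGraph n).Adj i z := ⟨Fin.ne_of_val_ne (by simpa using hi), Or.inr (Or.inl rfl)⟩
    have hdz : distMatrix (wheelGraph n) i z ≤ 1 := le_of_eq (wheel_dist_adj hadjz)
    have hdn : distMatrix (wheelGraph n) i (nxt hn i) ≤ 1 := le_of_eq (wheel_dist_adj (adj_nxt hn hi))
    have hdp : distMatrix (wheelGraph n) i (prv hn i) ≤ 1 := le_of_eq (wheel_dist_adj (adj_prv hn hi))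
    have hzi : z ≠ i := Fin.ne_of_val_ne (by simpa using fun h => hi h.symm)
    have hzn : z ≠ nxt hn i := Fin.ne_of_val_ne (fun h => nxt_val_ne_zero hn hi h.symm)
    have hzp : z ≠ prv hn i := Fin.ne_of_val_ne (fun h => prv_val_ne_zero hn hi h.symm)
    by_cases hv1 : v = z
    · exact row_bound_aux hn hiv (nxt_ne_self hn hi) (prv_ne_self hn hi) (nxt_ne_prv hn hi)
        (hv1 ▸ fun h => hzn h.symm) (hv1 ▸ fun h => hzp h.symm) hdn hdp
    by_cases hv2 : v = nxt hn i
    · exact row_bound_aux hn hiv hzi (prv_ne_self hn hi) hzp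
        (fun h => hv1 h.symm) (hv2 ▸ (fun h => (nxt_ne_prv hn hi) h.symm)) hdz hdp
    · exact row_bound_aux hn hiv hzi (nxt_ne_self hn hi) hzn
        (fun h => hv1 h.symm) (fun h => hv2 h.symm) hdz hdn


private lemma dot_split (z : Fin n) (f g : Fin n → ℝ) :
    f ⬝ᵥ g = f z * g z + ∑ j ∈ Finset.univ.erase z, f j * g j := by
  simp only [dotProduct]
  rw [← Finset.add_sum_erase Finset.univ _ (Finset.mem_univ z)]

private lemma mulVec_split (z : Fin n) (A : Matrix (Fin n) (Fin n) ℝ) (x : Fin n → ℝ) (i : Fin n) :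
    A.mulVec x i = A i z * x z + ∑ j ∈ Finset.univ.erase z, A i j * x j := by
  simp only [Matrix.mulVec]
  exact dot_split z _ _

private lemma mulVec_hub (hn : 5 ≤ n) {z : Fin n} (hz : z.val = 0) (a : ℝ) :
    (distMatrix (wheelGraph n)).mulVec (fun j => if j = z then a else 1) z = (n : ℝ) - 1 := by
  rw [mulVec_split z]
  rw [wheel_dist_self, zero_mul, zero_add]
  have h : ∀ j ∈ Finset.univ.erase z,
      distMatrix (wheelGraph n) z j * (if j = z then a else 1) = 1 := by
    intro j hj
    have hjz := (Finset.mem_erase.mp hj).1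
    rw [if_neg hjz, mul_one, wheel_dist_adj (wheel_adj_hub hn hz hjz)]
  rw [Finset.sum_congr rfl h, Finset.sum_const, nsmul_eq_mul, mul_one,
    Finset.card_erase_of_mem (Finset.mem_univ z), Finset.card_univ, Fintype.card_fin,
    Nat.cast_sub (by omega), Nat.cast_one]

private lemma mulVec_rim (hn : 5 ≤ n) {z i : Fin n} (hz : z.val = 0) (hi : i ≠ z) (a : ℝ) :
    (distMatrix (wheelGraph n)).mulVec (fun j => if j = z then a else 1) i
      = a + (2 * (n : ℝ) - 6) := by
  have hiv : i.val ≠ 0 := fun h => hi (Fin.ext (by rw [h, hz]))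
  have hadj : (wheelGraph n).Adj i z := ⟨hi, Or.inr (Or.inl hz)⟩
  rw [mulVec_split z, if_pos rfl, wheel_dist_adj hadj, one_mul]
  congr 1
  have h : ∀ j ∈ Finset.univ.erase z,
      distMatrix (wheelGraph n) i j * (if j = z then a else 1)
        = distMatrix (wheelGraph n) i j := by
    intro j hj; rw [if_neg (Finset.mem_erase.mp hj).1, mul_one]
  rw [Finset.sum_congr rfl h, rim_sum hn hz hiv]

private lemma mem_pareto_aux (hn : 5 ≤ n) {z : Fin n} (hz : z.val = 0) {a lam : ℝ}
    (ha : 0 ≤ a) (h1 : lam * a ≤ (n : ℝ) - 1) (h2 : lam = a + (2 * (n : ℝ) - 6))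
    (h3 : a * (lam * a - ((n : ℝ) - 1)) = 0) :
    IsParetoEigenpair (distMatrix (wheelGraph n)) lam (fun j => if j = z then a else 1) := by
  have hn5 : (5 : ℝ) ≤ (n : ℝ) := by exact_mod_cast hn
  set x : Fin n → ℝ := fun j => if j = z then a else 1 with hx
  have hw : (⟨1, by omega⟩ : Fin n) ≠ z := Fin.ne_of_val_ne (by simp [hz])
  refine ⟨?_, ?_, ?_, ?_⟩
  · intro h0
    have := congrFun h0 ⟨1, by omega⟩
    rw [hx] at this
    simp only [if_neg hw, Pi.zero_apply] at this
    exact one_ne_zero this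
  · intro i; rw [hx]; dsimp only; split
    · exact ha
    · norm_num
  · intro i
    by_cases h : i = z
    · rw [h, mulVec_hub hn hz, hx]; simp only [if_pos rfl]; exact h1
    · rw [mulVec_rim hn hz h, hx]; simp only [if_neg h, mul_one]
      linarith [h2.le]
  · have hsum1 : ∀ j ∈ Finset.univ.erase z, x j * x j = 1 := by
      intro j hj; rw [hx]; simp [if_neg (Finset.mem_erase.mp hj).1]
    have hcard : ((Finset.univ.erase z).card : ℝ) = (n : ℝ) - 1 := by
      rw [Finset.card_erase_of_mem (Finset.mem_univ z), Finset.card_univ, Fintype.card_fin,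
        Nat.cast_sub (by omega), Nat.cast_one]
    have hxx : x ⬝ᵥ x = a ^ 2 + ((n : ℝ) - 1) := by
      rw [dot_split z, Finset.sum_congr rfl hsum1, Finset.sum_const, nsmul_eq_mul, mul_one,
        hcard, hx]
      simp
      ring
    have hsum2 : ∀ j ∈ Finset.univ.erase z,
        x j * (distMatrix (wheelGraph n)).mulVec x j = a + (2 * (n : ℝ) - 6) := by
      intro j hj
      rw [hx]
      simp only [if_neg (Finset.mem_erase.mp hj).1, one_mul]
      exact mulVec_rim hn hz (Finset.mem_erase.mp hj).1 a
    have hxDx : x ⬝ᵥ (distMatrix (wheelGraph n)).mulVec x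
        = a * ((n : ℝ) - 1) + ((n : ℝ) - 1) * (a + (2 * (n : ℝ) - 6)) := by
      rw [dot_split z, Finset.sum_congr rfl hsum2, Finset.sum_const, nsmul_eq_mul, hcard,
        mulVec_hub hn hz, hx]
      simp
    rw [hxx, hxDx, eq_div_iff (by nlinarith)]
    linear_combination h3 + ((n : ℝ) - 1) * h2

private lemma pareto_le (hn : 5 ≤ n) {lam : ℝ} {x : Fin n → ℝ}
    (hp : IsParetoEigenpair (distMatrix (wheelGraph n)) lam x) {v : Fin n} (hv : x v = 0) :
    lam ≤ 2 * (n : ℝ) - 6 := by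
  obtain ⟨hx0, hxnn, hineq, -⟩ := hp
  obtain ⟨i, -, hmax⟩ := Finset.exists_max_image Finset.univ x ⟨v, Finset.mem_univ v⟩
  have hipos : 0 < x i := by
    obtain ⟨w, hw⟩ := Function.ne_iff.mp hx0
    have hw' : x w ≠ 0 := by simpa using hw
    exact lt_of_lt_of_le (lt_of_le_of_ne (hxnn w) (Ne.symm hw')) (hmax w (Finset.mem_univ w))
  have hiv : i ≠ v := fun h => by rw [h, hv] at hipos; exact lt_irrefl 0 hipos
  have h2 : (distMatrix (wheelGraph n)).mulVec x i ≤ (2 * (n : ℝ) - 6) * x i := by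
    rw [mulVec_split v, hv, mul_zero, zero_add]
    calc ∑ j ∈ Finset.univ.erase v, distMatrix (wheelGraph n) i j * x j
        ≤ ∑ j ∈ Finset.univ.erase v, distMatrix (wheelGraph n) i j * x i :=
          Finset.sum_le_sum (fun j _ =>
            mul_le_mul_of_nonneg_left (hmax j (Finset.mem_univ j)) (wheel_dist_nonneg i j))
      _ = (∑ j ∈ Finset.univ.erase v, distMatrix (wheelGraph n) i j) * x i := by
          rw [Finset.sum_mul]
      _ ≤ (2 * (n : ℝ) - 6) * x i :=
          mul_le_mul_of_nonneg_right (row_bound hn hiv) (le_of_lt hipos)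
  exact le_of_mul_le_mul_right (le_trans (hineq i) h2) hipos

private lemma pareto_exact {N : ℕ} {A : Matrix (Fin N) (Fin N) ℝ} {lam : ℝ} {x : Fin N → ℝ}
    (hp : IsParetoEigenpair A lam x) (hpos : ∀ i, 0 < x i) :
    ∀ i, A.mulVec x i = lam * x i := by
  obtain ⟨hx0, -, hineq, hray⟩ := hp
  obtain ⟨w, -⟩ := Function.ne_iff.mp hx0
  have hxx : 0 < x ⬝ᵥ x := by
    apply Finset.sum_pos (fun i _ => mul_pos (hpos i) (hpos i)) ⟨w, Finset.mem_univ w⟩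
  have key : x ⬝ᵥ A.mulVec x = lam * (x ⬝ᵥ x) := by
    rw [hray, div_mul_cancel₀ _ (ne_of_gt hxx)]
  have hsum : ∑ i, x i * (A.mulVec x i - lam * x i) = 0 := by
    have e2 : ∑ i, x i * (lam * x i) = lam * (x ⬝ᵥ x) := by
      simp only [dotProduct, Finset.mul_sum]
      exact Finset.sum_congr rfl (fun i _ => by ring)
    simp only [mul_sub]
    rw [Finset.sum_sub_distrib, e2]
    have e1 : ∑ i, x i * A.mulVec x i = x ⬝ᵥ A.mulVec x := rfl
    rw [e1, key, sub_self]
  have hall := (Finset.sum_eq_zero_iff_of_nonneg (fun i _ =>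
    mul_nonneg (le_of_lt (hpos i)) (sub_nonneg.mpr (hineq i)))).mp hsum
  intro i
  have hi := hall i (Finset.mem_univ i)
  rcases mul_eq_zero.mp hi with h | h
  · exact absurd h (ne_of_gt (hpos i))
  · linarith [sub_eq_zero.mp h]

private lemma distMatrix_wheel_symm (i j : Fin n) :
    distMatrix (wheelGraph n) i j = distMatrix (wheelGraph n) j i := by
  simp [distMatrix, SimpleGraph.dist_comm]

private lemma eigen_unique {N : ℕ} {A : Matrix (Fin N) (Fin N) ℝ}
    (hsym : ∀ i j, A i j = A j i) {l₁ l₂ : ℝ} {x y : Fin N → ℝ}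
    (hx : ∀ i, 0 < x i) (hy : ∀ i, 0 < y i) (hN : 0 < N)
    (hex : ∀ i, A.mulVec x i = l₁ * x i) (hey : ∀ i, A.mulVec y i = l₂ * y i) : l₁ = l₂ := by
  have h1 : x ⬝ᵥ A.mulVec y = l₂ * (x ⬝ᵥ y) := by
    simp only [dotProduct, hey, Finset.mul_sum]
    exact Finset.sum_congr rfl (fun i _ => by ring)
  have h2 : y ⬝ᵥ A.mulVec x = l₁ * (x ⬝ᵥ y) := by
    simp only [dotProduct, hex, Finset.mul_sum]
    exact Finset.sum_congr rfl (fun i _ => by ring)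
  have h3 : x ⬝ᵥ A.mulVec y = y ⬝ᵥ A.mulVec x := by
    simp only [dotProduct, Matrix.mulVec, Finset.mul_sum]
    rw [Finset.sum_comm]
    exact Finset.sum_congr rfl (fun j _ => Finset.sum_congr rfl (fun i _ => by
      rw [hsym i j]; ring))
  have hxy : 0 < x ⬝ᵥ y := by
    apply Finset.sum_pos (fun i _ => mul_pos (hx i) (hy i)) ⟨⟨0, hN⟩, Finset.mem_univ _⟩
  have : l₂ * (x ⬝ᵥ y) = l₁ * (x ⬝ᵥ y) := by rw [← h1, h3, h2]
  exact (mul_right_cancel₀ (ne_of_gt hxy) this.symm)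

end WheelAux

theorem stmt1 (n : ℕ) (hn : 5 ≤ n) :
    IsKthLargest (distParetoSet (wheelGraph n)) 2 (2 * ((n : ℝ) - 3)) := by
  have hn5 : (5 : ℝ) ≤ (n : ℝ) := by exact_mod_cast hn
  set z : Fin n := ⟨0, by omega⟩ with hzdef
  have hz : z.val = 0 := rfl
  set s : ℝ := Real.sqrt (((n : ℝ) - 3) ^ 2 + ((n : ℝ) - 1)) with hsdef
  have hs2 : s ^ 2 = ((n : ℝ) - 3) ^ 2 + ((n : ℝ) - 1) := Real.sq_sqrt (by nlinarith)
  have hsgt : (n : ℝ) - 3 < s := by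
    rw [hsdef, Real.lt_sqrt (by linarith)]
    linarith
  set lam0 : ℝ := ((n : ℝ) - 3) + s with hlam0
  set a0 : ℝ := s - ((n : ℝ) - 3) with ha0
  have ha0pos : 0 < a0 := by rw [ha0]; linarith
  have hla : lam0 * a0 = (n : ℝ) - 1 := by
    rw [hlam0, ha0]; nlinarith [hs2]
  have hmem0 : IsParetoEigenpair (distMatrix (wheelGraph n)) lam0
      (fun j => if j = z then a0 else 1) :=
    mem_pareto_aux hn hz (le_of_lt ha0pos) (le_of_eq hla)
      (by rw [hlam0, ha0]; ring) (by rw [hla]; ring)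
  have hmemL : IsParetoEigenpair (distMatrix (wheelGraph n)) (2 * ((n : ℝ) - 3))
      (fun j => if j = z then (0 : ℝ) else 1) :=
    mem_pareto_aux hn hz le_rfl (by rw [mul_zero]; linarith) (by ring) (by ring)
  have hLlt : 2 * ((n : ℝ) - 3) < lam0 := by rw [hlam0]; linarith
  constructor
  · exact ⟨_, hmemL⟩
  · have hset : {x ∈ distParetoSet (wheelGraph n) | 2 * ((n : ℝ) - 3) < x} = {lam0} := by
      ext μ
      simp only [distParetoSet, IsParetoEigenvalue, Set.mem_setOf_eq, Set.mem_singleton_iff]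
      constructor
      · rintro ⟨⟨y, hy⟩, hlt⟩
        have hypos : ∀ i, 0 < y i := by
          intro i
          rcases (hy.2.1 i).lt_or_eq with h | h
          · exact h
          · exfalso
            have := pareto_le hn hy h.symm
            linarith
        have hxpos : ∀ i, 0 < (fun j => if j = z then a0 else 1 : Fin n → ℝ) i := by
          intro i; dsimp only; split
          · exact ha0pos
          · norm_num
        exact eigen_unique (fun i j => distMatrix_wheel_symm i j) hypos hxpos (by omega)
          (pareto_exact hy hypos) (pareto_exact hmem0 hxpos)
      · rintro rfl
        exact ⟨⟨_, hmem0⟩, hLlt⟩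
    rw [hset, Set.ncard_singleton]
end

section
/- For every integer n ≥ 2, the largest two distance Pareto eigenvalues of the star S_n satisfy ρ₁(S_n) − ρ₂(S_n) = √(n² − 3n + 3) − n + 2. -/
open Matrix SimpleGraph

lemma star_dist (m : ℕ) (i j : Fin (m+2)) :
    (_root_.starGraph (m+2)).dist i j = if i = j then 0 else if i = 0 ∨ j = 0 then 1 else 2 := by
  split_ifs with h1 h2
  · subst h1; exact SimpleGraph.dist_self
  · have hadj : (_root_.starGraph (m+2)).Adj i j := by
      refine ⟨h1, ?_⟩
      rcases h2 with h | h <;> simp [h]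
    exact SimpleGraph.dist_eq_one_iff_adj.mpr hadj
  · push_neg at h2
    have hi0 : i ≠ 0 := h2.1
    have hj0 : j ≠ 0 := h2.2
    have a1 : (_root_.starGraph (m+2)).Adj i 0 := ⟨hi0, Or.inr rfl⟩
    have a2 : (_root_.starGraph (m+2)).Adj 0 j := ⟨Ne.symm hj0, Or.inl rfl⟩
    have hle : (_root_.starGraph (m+2)).dist i j ≤ 2 := by
      have := SimpleGraph.dist_le (SimpleGraph.Walk.cons a1 (SimpleGraph.Walk.cons a2 SimpleGraph.Walk.nil))
      simpa using this
    have hr : (_root_.starGraph (m+2)).Reachable i j :=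
      ⟨SimpleGraph.Walk.cons a1 (SimpleGraph.Walk.cons a2 SimpleGraph.Walk.nil)⟩
    have hne0 : (_root_.starGraph (m+2)).dist i j ≠ 0 := fun h => h1 (hr.dist_eq_zero_iff.mp h)
    have hne1 : (_root_.starGraph (m+2)).dist i j ≠ 1 := by
      intro h
      have hadj := SimpleGraph.dist_eq_one_iff_adj.mp h
      rcases hadj.2 with h | h
      · exact hi0 (Fin.ext h)
      · exact hj0 (Fin.ext h)
    omega

lemma star_entry (m : ℕ) (i j : Fin (m+2)) :
    distMatrix (starGraph (m+2)) i j
      = if i = j then 0 else if i = 0 ∨ j = 0 then 1 else 2 := by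
  show ((_root_.starGraph (m+2)).dist i j : ℝ) = _
  rw [star_dist]
  split_ifs <;> norm_num

lemma star_entry_nonneg (m : ℕ) (i j : Fin (m+2)) :
    0 ≤ distMatrix (starGraph (m+2)) i j := by
  rw [star_entry]; split_ifs <;> norm_num

lemma star_mulVec_zero (m : ℕ) (x : Fin (m+2) → ℝ) :
    (distMatrix (starGraph (m+2))).mulVec x 0 = ∑ j ∈ Finset.univ.erase 0, x j := by
  show ∑ j, distMatrix (starGraph (m+2)) 0 j * x j = _
  rw [← Finset.sum_erase_add _ _ (Finset.mem_univ (0 : Fin (m+2)))]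
  have h00 : distMatrix (starGraph (m+2)) 0 0 = 0 := by rw [star_entry, if_pos rfl]
  rw [h00, zero_mul, add_zero]
  refine Finset.sum_congr rfl fun j hj => ?_
  have hj0 : j ≠ 0 := (Finset.mem_erase.mp hj).1
  rw [star_entry]
  rw [if_neg (Ne.symm hj0), if_pos (Or.inl rfl), one_mul]

lemma star_mulVec_pend (m : ℕ) (x : Fin (m+2) → ℝ) (p : Fin (m+2)) (hp : p ≠ 0) :
    (distMatrix (starGraph (m+2))).mulVec x p
      = x 0 + 2 * ((∑ j ∈ Finset.univ.erase 0, x j) - x p) := by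
  show ∑ j, distMatrix (starGraph (m+2)) p j * x j = _
  rw [← Finset.sum_erase_add _ _ (Finset.mem_univ (0 : Fin (m+2)))]
  have h0 : distMatrix (starGraph (m+2)) p 0 = 1 := by
    rw [star_entry, if_neg hp, if_pos (Or.inr rfl)]
  rw [h0, one_mul]
  have hpmem : p ∈ Finset.univ.erase (0 : Fin (m+2)) :=
    Finset.mem_erase.mpr ⟨hp, Finset.mem_univ p⟩
  rw [← Finset.sum_erase_add _ _ hpmem]
  have hpp : distMatrix (starGraph (m+2)) p p = 0 := by
    rw [star_entry, if_pos rfl]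
  rw [hpp, zero_mul, add_zero]
  have hsum : ∑ j ∈ (Finset.univ.erase (0 : Fin (m+2))).erase p,
      distMatrix (starGraph (m+2)) p j * x j
      = ∑ j ∈ (Finset.univ.erase (0 : Fin (m+2))).erase p, 2 * x j := by
    refine Finset.sum_congr rfl fun j hj => ?_
    have hjp : j ≠ p := (Finset.mem_erase.mp hj).1
    have hj0 : j ≠ 0 := (Finset.mem_erase.mp (Finset.mem_erase.mp hj).2).1
    rw [star_entry, if_neg (Ne.symm hjp), if_neg (by push_neg; exact ⟨hp, hj0⟩)]
  rw [hsum, ← Finset.mul_sum]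
  have herase : ∑ j ∈ (Finset.univ.erase (0 : Fin (m+2))).erase p, x j
      = (∑ j ∈ Finset.univ.erase 0, x j) - x p := by
    have := Finset.sum_erase_add (Finset.univ.erase (0 : Fin (m+2))) x hpmem
    linarith
  rw [herase]; ring

lemma star_classify (m : ℕ) (lam : ℝ) (h : lam ∈ distParetoSet (starGraph (m+2))) :
    0 ≤ lam ∧ ∃ k : ℕ, 1 ≤ k ∧ k ≤ m + 1 ∧
      (lam = 2*(k:ℝ) - 2 ∨ lam^2 = (2*(k:ℝ)-2)*lam + (k:ℝ)) := by
  obtain ⟨x, hxne, hxnn, hge, hray⟩ := h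
  set A := distMatrix (starGraph (m+2)) with hA
  obtain ⟨i₀, hi₀⟩ := Function.ne_iff.mp hxne
  have hxx : 0 < x ⬝ᵥ x := by
    refine Finset.sum_pos' (fun i _ => mul_self_nonneg (x i)) ⟨i₀, Finset.mem_univ i₀, ?_⟩
    have := hxnn i₀
    have : 0 < x i₀ := lt_of_le_of_ne this (Ne.symm hi₀)
    exact mul_pos this this
  have hAx_nonneg : ∀ i, 0 ≤ A.mulVec x i := by
    intro i
    show (0:ℝ) ≤ ∑ j, A i j * x j
    exact Finset.sum_nonneg fun j _ => mul_nonneg (star_entry_nonneg m i j) (hxnn j)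
  have hnum : 0 ≤ x ⬝ᵥ A.mulVec x :=
    Finset.sum_nonneg fun i _ => mul_nonneg (hxnn i) (hAx_nonneg i)
  have hlam0 : 0 ≤ lam := by rw [hray]; exact div_nonneg hnum hxx.le
  have hknum : x ⬝ᵥ A.mulVec x = lam * (x ⬝ᵥ x) := by
    rw [hray]; field_simp
  have hexp : ∑ i, x i * (A.mulVec x i - lam * x i)
      = x ⬝ᵥ A.mulVec x - lam * (x ⬝ᵥ x) := by
    unfold dotProduct
    rw [Finset.mul_sum, ← Finset.sum_sub_distrib]
    exact Finset.sum_congr rfl fun i _ => by ring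
  have hsum0 : ∑ i, x i * (A.mulVec x i - lam * x i) = 0 := by
    rw [hexp, hknum]; ring
  have hcomp : ∀ i, x i * (A.mulVec x i - lam * x i) = 0 := by
    intro i
    have := (Finset.sum_eq_zero_iff_of_nonneg
      (fun i _ => mul_nonneg (hxnn i) (by linarith [hge i]))).mp hsum0 i (Finset.mem_univ i)
    exact this
  have heq : ∀ i, x i ≠ 0 → A.mulVec x i = lam * x i := by
    intro i hi
    rcases mul_eq_zero.mp (hcomp i) with h | h
    · exact absurd h hi
    · linarith
  set s := ∑ j ∈ Finset.univ.erase (0 : Fin (m+2)), x j with hsdef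
  have hs0 : 0 ≤ s := Finset.sum_nonneg fun j _ => hxnn j
  set P := Finset.filter (fun p => x p ≠ 0) (Finset.univ.erase (0 : Fin (m+2))) with hPdef
  have hPsum : ∑ p ∈ P, x p = s := Finset.sum_filter_ne_zero _
  have hPcard_le : P.card ≤ m + 1 := by
    have h1 := Finset.card_filter_le (Finset.univ.erase (0 : Fin (m+2)))
      (fun p => x p ≠ 0)
    have h2 : (Finset.univ.erase (0 : Fin (m+2))).card = m + 1 := by
      rw [Finset.card_erase_of_mem (Finset.mem_univ _), Finset.card_univ, Fintype.card_fin]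
      omega
    have h3 : P.card = (Finset.filter (fun p => x p ≠ 0) (Finset.univ.erase (0 : Fin (m+2)))).card := rfl
    omega
  have hP : ∀ p ∈ P, (lam + 2) * x p = x 0 + 2 * s := by
    intro p hp
    obtain ⟨hpe, hpx⟩ := Finset.mem_filter.mp hp
    have hp0 : p ≠ 0 := (Finset.mem_erase.mp hpe).1
    have := heq p hpx
    rw [star_mulVec_pend m x p hp0] at this
    linarith
  have hstar : (lam + 2) * s = P.card * (x 0 + 2 * s) := by
    calc (lam + 2) * s = ∑ p ∈ P, (lam + 2) * x p := by rw [← hPsum, Finset.mul_sum]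
    _ = ∑ _p ∈ P, (x 0 + 2 * s) := Finset.sum_congr rfl hP
    _ = P.card * (x 0 + 2 * s) := by rw [Finset.sum_const, nsmul_eq_mul]
  by_cases hx0 : x 0 = 0
  · have hi00 : i₀ ≠ 0 := by rintro rfl; exact hi₀ hx0
    have hiP : i₀ ∈ P := Finset.mem_filter.mpr
      ⟨Finset.mem_erase.mpr ⟨hi00, Finset.mem_univ _⟩, hi₀⟩
    have hspos : 0 < s := by
      rw [← hPsum]
      exact Finset.sum_pos' (fun p _ => hxnn p)
        ⟨i₀, hiP, lt_of_le_of_ne (hxnn i₀) (Ne.symm hi₀)⟩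
    have hk1 : 1 ≤ P.card := Finset.card_pos.mpr ⟨i₀, hiP⟩
    refine ⟨hlam0, P.card, hk1, hPcard_le, Or.inl ?_⟩
    have h2 : (lam + 2) * s = ((P.card : ℝ) * 2) * s := by
      rw [hstar, hx0]; ring
    have := mul_right_cancel₀ (ne_of_gt hspos) h2
    linarith
  · have hx0pos : 0 < x 0 := lt_of_le_of_ne (hxnn 0) (Ne.symm hx0)
    have h0eq : lam * x 0 = s := by
      rw [hsdef, ← star_mulVec_zero m x]
      exact (heq 0 hx0).symm
    by_cases hs : s = 0
    · have hlamz : lam = 0 := by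
        have := h0eq; rw [hs] at this
        exact (mul_eq_zero.mp this).resolve_right hx0
      exact ⟨hlam0, 1, le_refl 1, by omega, Or.inl (by rw [hlamz]; norm_num)⟩
    · have hspos : 0 < s := lt_of_le_of_ne hs0 (Ne.symm hs)
      have hPne : P.Nonempty := by
        rw [Finset.nonempty_iff_ne_empty]
        intro hPe
        rw [← hPsum, hPe, Finset.sum_empty] at hspos
        exact lt_irrefl 0 hspos
      have hk1 : 1 ≤ P.card := Finset.card_pos.mpr hPne
      refine ⟨hlam0, P.card, hk1, hPcard_le, Or.inr ?_⟩
      have key : ((lam + 2) * lam) * x 0 = ((P.card : ℝ) + 2 * P.card * lam) * x 0 := by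
        have h2 := hstar
        rw [← h0eq] at h2
        ring_nf at h2 ⊢
        linarith
      have := mul_right_cancel₀ (ne_of_gt hx0pos) key
      nlinarith [this]

lemma star_sum_ones (m : ℕ) (x : Fin (m+2) → ℝ) (hx : ∀ j : Fin (m+2), j ≠ 0 → x j = 1) :
    ∑ j ∈ Finset.univ.erase (0 : Fin (m+2)), x j = (m : ℝ) + 1 := by
  rw [Finset.sum_congr rfl (fun j hj => hx j (Finset.mem_erase.mp hj).1),
    Finset.sum_const, Finset.card_erase_of_mem (Finset.mem_univ _), Finset.card_univ,
    Fintype.card_fin, nsmul_eq_mul, mul_one]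
  push_cast
  ring

lemma one_ne_zero_fin (m : ℕ) : (1 : Fin (m+2)) ≠ 0 := by
  intro h
  have := congrArg Fin.val h
  simp [Fin.val_one] at this

lemma star_mem_two_m (m : ℕ) : (2 * (m : ℝ)) ∈ distParetoSet (starGraph (m+2)) := by
  classical
  set x : Fin (m+2) → ℝ := fun i => if i = 0 then 0 else 1 with hxdef
  have hx1 : ∀ j : Fin (m+2), j ≠ 0 → x j = 1 := fun j hj => if_neg hj
  have hs : ∑ j ∈ Finset.univ.erase (0 : Fin (m+2)), x j = (m : ℝ) + 1 :=
    star_sum_ones m x hx1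
  have hxnn : ∀ i, 0 ≤ x i := by
    intro i; rw [hxdef]; dsimp only; split_ifs <;> norm_num
  have hxne : x ≠ 0 := by
    intro h
    have := congrFun h 1
    rw [hx1 1 (one_ne_zero_fin m)] at this
    norm_num at this
  have hx0 : x 0 = 0 := if_pos rfl
  have hmv0 : (distMatrix (starGraph (m+2))).mulVec x 0 = (m : ℝ) + 1 := by
    rw [star_mulVec_zero m x, hs]
  have hmvp : ∀ p : Fin (m+2), p ≠ 0 →
      (distMatrix (starGraph (m+2))).mulVec x p = 2 * (m : ℝ) := by
    intro p hp
    rw [star_mulVec_pend m x p hp, hs, hx0, hx1 p hp]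
    ring
  refine ⟨x, hxne, hxnn, ?_, ?_⟩
  · intro i
    by_cases hi : i = 0
    · subst hi; rw [hx0, hmv0]; norm_num; positivity
    · rw [hmvp i hi, hx1 i hi]; norm_num
  · have hnum : x ⬝ᵥ (distMatrix (starGraph (m+2))).mulVec x
        = ((m : ℝ) + 1) * (2 * m) := by
      show ∑ i, x i * (distMatrix (starGraph (m+2))).mulVec x i = _
      rw [← Finset.sum_erase_add _ _ (Finset.mem_univ (0 : Fin (m+2))), hx0, zero_mul,
        add_zero]
      have hcg : ∑ j ∈ Finset.univ.erase (0 : Fin (m+2)),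
          x j * (distMatrix (starGraph (m+2))).mulVec x j
          = ∑ _j ∈ Finset.univ.erase (0 : Fin (m+2)), (2 * (m:ℝ)) := by
        refine Finset.sum_congr rfl fun j hj => ?_
        have hj0 : j ≠ 0 := (Finset.mem_erase.mp hj).1
        rw [hx1 j hj0, hmvp j hj0, one_mul]
      rw [hcg, Finset.sum_const, Finset.card_erase_of_mem (Finset.mem_univ _),
        Finset.card_univ, Fintype.card_fin, nsmul_eq_mul]
      push_cast; ring
    have hden : x ⬝ᵥ x = (m : ℝ) + 1 := by
      show ∑ i, x i * x i = _
      rw [← Finset.sum_erase_add _ _ (Finset.mem_univ (0 : Fin (m+2))), hx0, zero_mul,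
        add_zero]
      have hcg : ∑ j ∈ Finset.univ.erase (0 : Fin (m+2)), x j * x j
          = ∑ _j ∈ Finset.univ.erase (0 : Fin (m+2)), (1:ℝ) := by
        refine Finset.sum_congr rfl fun j hj => ?_
        have hj0 : j ≠ 0 := (Finset.mem_erase.mp hj).1
        rw [hx1 j hj0, one_mul]
      rw [hcg, Finset.sum_const, Finset.card_erase_of_mem (Finset.mem_univ _),
        Finset.card_univ, Fintype.card_fin, nsmul_eq_mul, mul_one]
      push_cast; ring
    rw [hnum, hden]
    have : (m : ℝ) + 1 ≠ 0 := by positivity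
    field_simp

lemma star_r_sq (m : ℕ) : (Real.sqrt ((m:ℝ)^2 + m + 1))^2 = (m:ℝ)^2 + m + 1 :=
  Real.sq_sqrt (by positivity)

lemma star_r_gt (m : ℕ) : (m : ℝ) < Real.sqrt ((m:ℝ)^2 + m + 1) := by
  have h1 := star_r_sq m
  have h2 := Real.sqrt_nonneg ((m:ℝ)^2 + m + 1)
  nlinarith

lemma star_mem_M (m : ℕ) :
    ((m : ℝ) + Real.sqrt ((m:ℝ)^2 + m + 1)) ∈ distParetoSet (starGraph (m+2)) := by
  classical
  set r := Real.sqrt ((m:ℝ)^2 + m + 1) with hrdef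
  have hr2 := star_r_sq m
  have hrm := star_r_gt m
  set lam := (m : ℝ) + r with hlamdef
  set x : Fin (m+2) → ℝ := fun i => if i = 0 then r - m else 1 with hxdef
  have hx1 : ∀ j : Fin (m+2), j ≠ 0 → x j = 1 := fun j hj => if_neg hj
  have hx0 : x 0 = r - m := if_pos rfl
  have hs : ∑ j ∈ Finset.univ.erase (0 : Fin (m+2)), x j = (m : ℝ) + 1 :=
    star_sum_ones m x hx1
  have hxnn : ∀ i, 0 ≤ x i := by
    intro i; rw [hxdef]; dsimp only; split_ifs <;> [linarith; norm_num]
  have hxne : x ≠ 0 := by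
    intro h
    have := congrFun h 1
    rw [hx1 1 (one_ne_zero_fin m)] at this
    norm_num at this
  have heig : ∀ i, (distMatrix (starGraph (m+2))).mulVec x i = lam * x i := by
    intro i
    by_cases hi : i = 0
    · subst hi
      rw [star_mulVec_zero m x, hs, hx0]
      nlinarith
    · rw [star_mulVec_pend m x i hi, hs, hx0, hx1 i hi]
      ring
  refine ⟨x, hxne, hxnn, fun i => le_of_eq (heig i).symm, ?_⟩
  have hnum : x ⬝ᵥ (distMatrix (starGraph (m+2))).mulVec x = lam * (x ⬝ᵥ x) := by
    show ∑ i, x i * (distMatrix (starGraph (m+2))).mulVec x i = lam * ∑ i, x i * x i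
    rw [Finset.mul_sum]
    refine Finset.sum_congr rfl fun i _ => ?_
    rw [heig i]; ring
  have hden : 0 < x ⬝ᵥ x := by
    refine Finset.sum_pos' (fun i _ => mul_self_nonneg (x i)) ⟨1, Finset.mem_univ _, ?_⟩
    rw [hx1 1 (one_ne_zero_fin m)]
    norm_num
  rw [hnum]
  field_simp

lemma star_finite (m : ℕ) : (distParetoSet (starGraph (m+2))).Finite := by
  have hfinT : (⋃ k ∈ Finset.range (m+2),
      ({2*(k:ℝ)-2, ((k:ℝ)-1) + Real.sqrt (((k:ℝ)-1)^2+k),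
        ((k:ℝ)-1) - Real.sqrt (((k:ℝ)-1)^2+k)} : Set ℝ)).Finite := by
    refine Set.Finite.biUnion (Finset.range (m+2)).finite_toSet (fun k _ => ?_)
    exact ((Set.finite_singleton _).insert _).insert _
  refine Set.Finite.subset hfinT ?_
  intro lam hl
  obtain ⟨hl0, k, hk1, hk2, hcase⟩ := star_classify m lam hl
  simp only [Set.mem_iUnion, Finset.mem_range, Set.mem_insert_iff,
    Set.mem_singleton_iff, exists_prop]
  refine ⟨k, by omega, ?_⟩
  rcases hcase with h | h
  · left; exact h
  · right
    have he2 : (Real.sqrt (((k:ℝ)-1)^2+k))^2 = ((k:ℝ)-1)^2 + k :=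
      Real.sq_sqrt (by positivity)
    have hfac : (lam - (((k:ℝ)-1) + Real.sqrt (((k:ℝ)-1)^2+k)))
        * (lam - (((k:ℝ)-1) - Real.sqrt (((k:ℝ)-1)^2+k))) = 0 := by
      linear_combination h - he2
    rcases mul_eq_zero.mp hfac with h' | h'
    · left; linarith [sub_eq_zero.mp h']
    · right; linarith [sub_eq_zero.mp h']

theorem stmt7 (n : ℕ) (hn : 2 ≤ n) (ρ1 ρ2 : ℝ)
    (hρ1 : IsKthLargest (distParetoSet (starGraph n)) 1 ρ1)
    (hρ2 : IsKthLargest (distParetoSet (starGraph n)) 2 ρ2) :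
    ρ1 - ρ2 = Real.sqrt ((n : ℝ) ^ 2 - 3 * (n : ℝ) + 3) - (n : ℝ) + 2 := by
  obtain ⟨m, rfl⟩ : ∃ m, n = m + 2 := ⟨n - 2, by omega⟩
  set r := Real.sqrt ((m:ℝ)^2 + m + 1) with hrdef
  have hr2 := star_r_sq m
  have hrm := star_r_gt m
  set M := (m : ℝ) + r with hMdef
  set S := distParetoSet (starGraph (m+2)) with hSdef
  have hMS : M ∈ S := star_mem_M m
  have hmS : (2 * (m : ℝ)) ∈ S := star_mem_two_m m
  have hlt : 2 * (m : ℝ) < M := by rw [hMdef]; linarith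
  have hSfin : S.Finite := star_finite m
  have hupper : ∀ lam ∈ S, lam ≤ 2 * (m : ℝ) ∨ lam = M := by
    intro lam hl
    obtain ⟨hl0, k, hk1, hk2, hcase⟩ := star_classify m lam hl
    have hkr : (k : ℝ) ≤ m + 1 := by exact_mod_cast hk2
    have hkr1 : (1 : ℝ) ≤ k := by exact_mod_cast hk1
    rcases hcase with h | h
    · left; linarith
    · by_cases hk : k ≤ m
      · left
        by_contra hgt
        push_neg at hgt
        have hkm : (k : ℝ) ≤ m := by exact_mod_cast hk
        have h1 : 0 < lam - 2 * (k : ℝ) := by linarith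
        have h2 : 0 < lam + 1 := by linarith
        nlinarith [mul_pos h1 h2]
      · have hkm : k = m + 1 := by omega
        subst hkm
        right
        have hquad : lam^2 = 2*(m:ℝ)*lam + ((m:ℝ)+1) := by
          push_cast at h ⊢
          linarith
        have hfac : (lam - ((m:ℝ) + r)) * (lam - ((m:ℝ) - r)) = 0 := by
          linear_combination hquad - hr2
        rcases mul_eq_zero.mp hfac with h' | h'
        · rw [hMdef]; linarith [sub_eq_zero.mp h']
        · have := sub_eq_zero.mp h'
          linarith
  -- ρ1 = M
  have hρ1M : ρ1 = M := by
    have hfin1 : {x ∈ S | ρ1 < x}.Finite := hSfin.subset (fun y hy => hy.1)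
    have hempty : {x ∈ S | ρ1 < x} = ∅ := by
      have h1 : {x ∈ S | ρ1 < x}.ncard = 0 := by simpa using hρ1.2
      exact (Set.ncard_eq_zero hfin1).mp h1
    have hle : ∀ y ∈ S, y ≤ ρ1 := by
      intro y hy
      by_contra hlt'
      push_neg at hlt'
      exact Set.eq_empty_iff_forall_notMem.mp hempty y ⟨hy, hlt'⟩
    have hMle : M ≤ ρ1 := hle M hMS
    rcases hupper ρ1 hρ1.1 with h | h
    · linarith
    · exact h
  -- ρ2 = 2m
  have hρ2m : ρ2 = 2 * (m : ℝ) := by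
    have h2 : {x ∈ S | ρ2 < x}.ncard = 1 := by simpa using hρ2.2
    rcases lt_trichotomy ρ2 (2 * (m : ℝ)) with hc | hc | hc
    · exfalso
      have hsub : ({2 * (m : ℝ), M} : Set ℝ) ⊆ {x ∈ S | ρ2 < x} := by
        rintro y (rfl | rfl)
        · exact ⟨hmS, hc⟩
        · exact ⟨hMS, lt_trans hc hlt⟩
      have hfin2 : {x ∈ S | ρ2 < x}.Finite := hSfin.subset (fun y hy => hy.1)
      have hcard : ({2 * (m : ℝ), M} : Set ℝ).ncard = 2 :=
        Set.ncard_pair (ne_of_lt hlt)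
      have := Set.ncard_le_ncard hsub hfin2
      rw [hcard, h2] at this
      omega
    · exact hc
    · exfalso
      have hM2 : ρ2 = M := (hupper ρ2 hρ2.1).resolve_left (not_le.mpr hc)
      have hempty : {x ∈ S | ρ2 < x} = ∅ := by
        rw [Set.eq_empty_iff_forall_notMem]
        rintro y ⟨hyS, hy⟩
        rcases hupper y hyS with h | h
        · rw [hM2] at hy; linarith
        · rw [hM2, h] at hy; exact lt_irrefl _ hy
      rw [hempty] at h2
      simp at h2
  rw [hρ1M, hρ2m, hMdef]
  have harg : ((m+2 : ℕ) : ℝ) ^ 2 - 3 * ((m+2 : ℕ) : ℝ) + 3 = (m:ℝ)^2 + m + 1 := by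
    push_cast; ring
  rw [harg, ← hrdef]
  push_cast
  ring
end

section
/- Let G be a connected graph on n ≥ 3 vertices and let x be the unit positive Perron eigenvector of the distance matrix D(G), so that D(G)x = ρ₁(G)x. Then for any vertex v with 2x_v² < 1, ρ₁(G)/ρ₂(G) ≤ (1 − x_v²)/(1 − 2x_v²), and equality holds if and only if x_u = d(u,v)/√((ρ₁(G) − ρ₂(G))(2ρ₁(G) − ρ₂(G))) for all vertices u ≠ v. -/
open Matrix SimpleGraph

lemma dot_self_nonneg {n : ℕ} (w : Fin n → ℝ) : 0 ≤ w ⬝ᵥ w := by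
  simp only [dotProduct]
  exact Finset.sum_nonneg fun i _ => mul_self_nonneg _

lemma dot_mulVec_comm' {n : ℕ} {D : Matrix (Fin n) (Fin n) ℝ}
    (hD : ∀ i j, D i j = D j i) (a b : Fin n → ℝ) :
    a ⬝ᵥ D *ᵥ b = b ⬝ᵥ D *ᵥ a := by
  simp only [dotProduct, Matrix.mulVec, Finset.mul_sum]
  rw [Finset.sum_comm]
  exact Finset.sum_congr rfl fun j _ => Finset.sum_congr rfl fun i _ => by rw [hD i j]; ring

lemma aux_nonpos {A c ε : ℝ} (hε : 0 < ε)
    (h : ∀ s : ℝ, 0 < s → s ≤ ε → 2*s*A ≤ c*s^2) : A ≤ 0 := by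
  by_contra hA
  push_neg at hA
  set s := min ε (A/(|c|+1)) with hs
  have hs0 : 0 < s := lt_min hε (div_pos hA (by positivity))
  have h1 := h s hs0 (min_le_left _ _)
  have h2 : s ≤ A/(|c|+1) := min_le_right _ _
  have h3 : c ≤ |c| := le_abs_self c
  have h4 : (0:ℝ) ≤ |c| := abs_nonneg c
  have h5 : s * (|c|+1) ≤ A := by
    rw [← le_div_iff₀ (by positivity)]; exact h2
  nlinarith [mul_pos hs0 hA, mul_le_mul_of_nonneg_left h5 hs0.le,
    mul_nonneg (sub_nonneg.2 h3) (sq_nonneg s)]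

lemma aux_zero {A c ε : ℝ} (hε : 0 < ε)
    (h : ∀ s : ℝ, |s| ≤ ε → 2*s*A ≤ c*s^2) : A = 0 := by
  have h1 : A ≤ 0 := aux_nonpos hε fun s hs hsε => h s (by rw [abs_of_pos hs]; exact hsε)
  have h2 : -A ≤ 0 := by
    apply aux_nonpos (c := c) hε
    intro s hs hsε
    have := h (-s) (by rw [abs_neg, abs_of_pos hs]; exact hsε)
    nlinarith
  linarith

lemma cont_quad {n : ℕ} (D : Matrix (Fin n) (Fin n) ℝ) :
    Continuous fun y : Fin n → ℝ => y ⬝ᵥ D *ᵥ y := by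
  simp only [dotProduct, Matrix.mulVec]
  apply continuous_finset_sum
  intro i _
  exact (continuous_apply i).mul
    (continuous_finset_sum _ fun j _ => continuous_const.mul (continuous_apply j))

lemma cont_dot {n : ℕ} : Continuous fun y : Fin n → ℝ => y ⬝ᵥ y := by
  simp only [dotProduct]
  exact continuous_finset_sum _ fun i _ => (continuous_apply i).mul (continuous_apply i)

lemma exists_max {n : ℕ} (D : Matrix (Fin n) (Fin n) ℝ) (v u0 : Fin n) (hu0 : u0 ≠ v) :
    ∃ y₀ : Fin n → ℝ, ((∀ i, 0 ≤ y₀ i) ∧ y₀ v = 0 ∧ y₀ ⬝ᵥ y₀ = 1) ∧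
      ∀ w : Fin n → ℝ, (∀ i, 0 ≤ w i) → w v = 0 → w ⬝ᵥ w = 1 →
        w ⬝ᵥ D *ᵥ w ≤ y₀ ⬝ᵥ D *ᵥ y₀ := by
  set K : Set (Fin n → ℝ) := {y | (∀ i, 0 ≤ y i) ∧ y v = 0 ∧ y ⬝ᵥ y = 1} with hK
  have hne : K.Nonempty := by
    refine ⟨Pi.single u0 1, fun i => ?_, ?_, ?_⟩
    · rw [Pi.single_apply]; split <;> norm_num
    · rw [Pi.single_apply, if_neg (fun h => hu0 h.symm)]
    · rw [single_dotProduct, Pi.single_eq_same, mul_one]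
  have hclosed : IsClosed K := by
    have h1 : K = (⋂ i, {y : Fin n → ℝ | 0 ≤ y i}) ∩
        ({y : Fin n → ℝ | y v = 0} ∩ {y : Fin n → ℝ | y ⬝ᵥ y = 1}) := by
      ext y; simp [hK]
    rw [h1]
    exact (isClosed_iInter fun i => isClosed_le continuous_const (continuous_apply i)).inter
      ((isClosed_eq (continuous_apply v) continuous_const).inter
        (isClosed_eq cont_dot continuous_const))
  have hbdd : Bornology.IsBounded K := by
    rw [isBounded_iff_forall_norm_le]
    refine ⟨1, fun y hy => ?_⟩
    rw [pi_norm_le_iff_of_nonneg zero_le_one]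
    intro i
    rw [Real.norm_eq_abs, abs_le_one_iff_mul_self_le_one]
    calc y i * y i ≤ ∑ j, y j * y j :=
          Finset.single_le_sum (fun j _ => mul_self_nonneg (y j)) (Finset.mem_univ i)
      _ = 1 := hy.2.2
  have hcomp : IsCompact K := Metric.isCompact_iff_isClosed_bounded.mpr ⟨hclosed, hbdd⟩
  obtain ⟨y₀, hy₀K, hmax⟩ := hcomp.exists_isMaxOn hne (cont_quad D).continuousOn
  exact ⟨y₀, hy₀K, fun w h1 h2 h3 => hmax (⟨h1, h2, h3⟩ : w ∈ K)⟩

lemma cone_bound {n : ℕ} (D : Matrix (Fin n) (Fin n) ℝ) (v : Fin n) (y₀ : Fin n → ℝ)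
    (hmax : ∀ w : Fin n → ℝ, (∀ i, 0 ≤ w i) → w v = 0 → w ⬝ᵥ w = 1 →
        w ⬝ᵥ D *ᵥ w ≤ y₀ ⬝ᵥ D *ᵥ y₀)
    (w : Fin n → ℝ) (hwn : ∀ i, 0 ≤ w i) (hwv : w v = 0) :
    w ⬝ᵥ D *ᵥ w ≤ (y₀ ⬝ᵥ D *ᵥ y₀) * (w ⬝ᵥ w) := by
  set N := w ⬝ᵥ w with hN
  have hN0 : 0 ≤ N := dot_self_nonneg w
  rcases hN0.eq_or_lt with h0 | hpos
  · have hw0 : w = 0 := dotProduct_self_eq_zero.mp h0.symm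
    rw [hw0, hN, hw0]
    simp
  · set c := (Real.sqrt N)⁻¹ with hc
    have hsN : Real.sqrt N > 0 := Real.sqrt_pos.mpr hpos
    have hc0 : 0 < c := inv_pos.mpr hsN
    have hcc : c * c * N = 1 := by
      rw [hc, ← mul_inv]
      rw [Real.mul_self_sqrt hN0]
      field_simp
    set z := c • w with hz
    have h1 : z ⬝ᵥ z = 1 := by
      rw [hz, smul_dotProduct, dotProduct_smul, smul_eq_mul, smul_eq_mul, ← mul_assoc, hcc]
    have h2 : z ⬝ᵥ D *ᵥ z = c * c * (w ⬝ᵥ D *ᵥ w) := by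
      rw [hz, Matrix.mulVec_smul, smul_dotProduct, dotProduct_smul, smul_eq_mul, smul_eq_mul]
      ring
    have h3 := hmax z (fun i => by
        rw [hz, Pi.smul_apply, smul_eq_mul]; exact mul_nonneg hc0.le (hwn i))
      (by rw [hz, Pi.smul_apply, smul_eq_mul, hwv, mul_zero]) h1
    rw [h2] at h3
    have hccN : c * c = N⁻¹ := by
      field_simp at hcc ⊢
      linarith [hcc]
    rw [hccN] at h3
    calc w ⬝ᵥ D *ᵥ w = N * (N⁻¹ * (w ⬝ᵥ D *ᵥ w)) := by field_simp
      _ ≤ N * (y₀ ⬝ᵥ D *ᵥ y₀) := by apply mul_le_mul_of_nonneg_left h3 hN0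
      _ = (y₀ ⬝ᵥ D *ᵥ y₀) * N := mul_comm _ _

lemma expand_quad {n : ℕ} {D : Matrix (Fin n) (Fin n) ℝ}
    (hD : ∀ i j, D i j = D j i) (w : Fin n → ℝ) (u : Fin n) (s : ℝ) :
    (w + s • (Pi.single u 1 : Fin n → ℝ)) ⬝ᵥ D *ᵥ (w + s • (Pi.single u 1 : Fin n → ℝ))
      = w ⬝ᵥ D *ᵥ w + 2*s*((D *ᵥ w) u) + s^2 * D u u := by
  have hcol : w ⬝ᵥ (D *ᵥ (Pi.single u 1 : Fin n → ℝ)) = (D *ᵥ w) u := by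
    rw [Matrix.mulVec_single_one]
    simp only [dotProduct, Matrix.mulVec, mul_one, Matrix.col_apply]
    exact Finset.sum_congr rfl fun i _ => by rw [hD i u]; ring
  have hrow : (Pi.single u 1 : Fin n → ℝ) ⬝ᵥ (D *ᵥ w) = (D *ᵥ w) u := by
    rw [single_dotProduct, one_mul]
  have hee : (Pi.single u 1 : Fin n → ℝ) ⬝ᵥ (D *ᵥ (Pi.single u 1 : Fin n → ℝ)) = D u u := by
    rw [Matrix.mulVec_single_one, single_dotProduct, one_mul, Matrix.col_apply]
  rw [Matrix.mulVec_add, Matrix.mulVec_smul, dotProduct_add, add_dotProduct, add_dotProduct,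
    dotProduct_smul, smul_dotProduct, smul_dotProduct, dotProduct_smul,
    smul_eq_mul, smul_eq_mul, smul_eq_mul, smul_eq_mul, hcol, hrow, hee]
  ring

lemma expand_dot {n : ℕ} (w : Fin n → ℝ) (u : Fin n) (s : ℝ) :
    (w + s • (Pi.single u 1 : Fin n → ℝ)) ⬝ᵥ (w + s • (Pi.single u 1 : Fin n → ℝ))
      = w ⬝ᵥ w + 2*s*(w u) + s^2 := by
  rw [dotProduct_add, add_dotProduct, add_dotProduct, dotProduct_smul, smul_dotProduct,
    smul_dotProduct, dotProduct_smul, smul_eq_mul, smul_eq_mul, smul_eq_mul, smul_eq_mul,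
    dotProduct_single, single_dotProduct, single_dotProduct,
    Pi.single_eq_same]
  ring

lemma first_order {n : ℕ} {D : Matrix (Fin n) (Fin n) ℝ}
    (hD : ∀ i j, D i j = D j i) {v : Fin n} {μ : ℝ}
    (hL2 : ∀ w : Fin n → ℝ, (∀ i, 0 ≤ w i) → w v = 0 → w ⬝ᵥ D *ᵥ w ≤ μ * (w ⬝ᵥ w))
    (w : Fin n → ℝ) (hwn : ∀ i, 0 ≤ w i) (hwv : w v = 0)
    (hQ : w ⬝ᵥ D *ᵥ w = μ * (w ⬝ᵥ w))
    (u : Fin n) (huv : u ≠ v) (hdiag : D u u = 0) (hwu : 0 < w u) :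
    (D *ᵥ w) u = μ * w u := by
  have key : (D *ᵥ w) u - μ * w u = 0 := by
    apply aux_zero (c := μ) hwu
    intro s hs
    set z := w + s • (Pi.single u 1 : Fin n → ℝ) with hz
    have hzn : ∀ i, 0 ≤ z i := by
      intro i
      rw [hz]
      simp only [Pi.add_apply, Pi.smul_apply, smul_eq_mul, Pi.single_apply]
      by_cases hi : i = u
      · rw [if_pos hi, mul_one, hi]
        have := neg_abs_le s
        linarith
      · rw [if_neg hi, mul_zero, add_zero]
        exact hwn i
    have hzv : z v = 0 := by
      rw [hz]
      simp only [Pi.add_apply, Pi.smul_apply, smul_eq_mul, Pi.single_apply,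
        if_neg (fun h : v = u => huv h.symm), mul_zero, add_zero, hwv]
    have := hL2 z hzn hzv
    rw [hz, expand_quad hD, expand_dot, hdiag, hQ] at this
    nlinarith [this]
  linarith

theorem stmt9 (n : ℕ) (hn : 3 ≤ n) (G : SimpleGraph (Fin n)) (hG : G.Connected)
    (ρ1 ρ2 : ℝ)
    (hρ1 : IsKthLargest (distParetoSet G) 1 ρ1)
    (hρ2 : IsKthLargest (distParetoSet G) 2 ρ2)
    (x : Fin n → ℝ) (hpos : ∀ i, 0 < x i) (hunit : x ⬝ᵥ x = 1)
    (heig : (distMatrix G).mulVec x = ρ1 • x)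
    (v : Fin n) (hv : 2 * (x v) ^ 2 < 1) :
    ρ1 / ρ2 ≤ (1 - (x v) ^ 2) / (1 - 2 * (x v) ^ 2) ∧
    (ρ1 / ρ2 = (1 - (x v) ^ 2) / (1 - 2 * (x v) ^ 2) ↔
      ∀ u : Fin n, u ≠ v →
        x u = (G.dist u v : ℝ) / Real.sqrt ((ρ1 - ρ2) * (2 * ρ1 - ρ2))) := by
  classical
  set D := distMatrix G with hDdef
  have hsym : ∀ i j, D i j = D j i := fun i j => by
    simp only [hDdef, distMatrix]
    rw [SimpleGraph.dist_comm]
  have hdiag : ∀ i, D i i = 0 := fun i => by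
    simp [hDdef, distMatrix]
  have hnn : ∀ i j, 0 ≤ D i j := fun i j => by
    simp only [hDdef, distMatrix]
    positivity
  have hone : ∀ i j, i ≠ j → 1 ≤ D i j := fun i j hij => by
    simp only [hDdef, distMatrix]
    exact_mod_cast hG.pos_dist_of_ne hij
  -- a vertex different from v
  have hex : ∃ u0 : Fin n, u0 ≠ v := by
    by_cases hv0 : v.val = 0
    · exact ⟨⟨1, by omega⟩, Fin.ne_of_val_ne (by show (1:ℕ) ≠ v.val; omega)⟩
    · exact ⟨⟨0, by omega⟩, Fin.ne_of_val_ne (by show (0:ℕ) ≠ v.val; omega)⟩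
  obtain ⟨u0, hu0⟩ := hex
  have heigp : ∀ i, (D *ᵥ x) i = ρ1 * x i := fun i => by rw [heig]; rfl
  -- positivity of ρ1
  have hρ1pos : 0 < ρ1 := by
    have h1 : (∑ j, D v j * x j) = ρ1 * x v := heigp v
    have h2 : D v u0 * x u0 ≤ ∑ j, D v j * x j :=
      Finset.single_le_sum (fun j _ => mul_nonneg (hnn v j) (hpos j).le) (Finset.mem_univ u0)
    have h3 : 0 < D v u0 * x u0 :=
      mul_pos (lt_of_lt_of_le one_pos (hone v u0 (Ne.symm hu0))) (hpos u0)
    have h4 : 0 < ρ1 * x v := by rw [← h1]; linarith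
    by_contra hle
    push_neg at hle
    nlinarith [hpos v]
  have hQx : x ⬝ᵥ D *ᵥ x = ρ1 := by
    rw [heig, dotProduct_smul, smul_eq_mul, hunit, mul_one]
  set t := (x v) ^ 2 with ht
  have htnn : 0 ≤ t := by rw [ht]; positivity
  have ht2 : 0 < 1 - 2*t := by linarith
  have h1t : 0 < 1 - t := by linarith
  -- the restricted vector w
  set w : Fin n → ℝ := x - (x v) • (Pi.single v 1 : Fin n → ℝ) with hwdef0
  have hwdef : w = x + (-(x v)) • (Pi.single v 1 : Fin n → ℝ) := by
    rw [hwdef0, neg_smul, ← sub_eq_add_neg]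
  have hwv : w v = 0 := by
    rw [hwdef0]
    simp [Pi.single_eq_same]
  have hwi : ∀ i, i ≠ v → w i = x i := by
    intro i hi
    rw [hwdef0]
    simp [Pi.single_apply, hi]
  have hwn : ∀ i, 0 ≤ w i := by
    intro i
    by_cases hi : i = v
    · rw [hi, hwv]
    · rw [hwi i hi]; exact (hpos i).le
  have hQw : w ⬝ᵥ D *ᵥ w = ρ1 * (1 - 2*t) := by
    rw [hwdef, expand_quad hsym, hQx, heigp v, hdiag v, ht]
    ring
  have hNw : w ⬝ᵥ w = 1 - t := by
    rw [hwdef, expand_dot, hunit, ht]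
    ring
  -- the maximizer
  obtain ⟨y₀, ⟨hy₀n, hy₀v, hy₀1⟩, hmax⟩ := exists_max D v u0 hu0
  set μ := y₀ ⬝ᵥ D *ᵥ y₀ with hμ
  have hL2 : ∀ z : Fin n → ℝ, (∀ i, 0 ≤ z i) → z v = 0 → z ⬝ᵥ D *ᵥ z ≤ μ * (z ⬝ᵥ z) :=
    fun z h1 h2 => cone_bound D v y₀ hmax z h1 h2
  have hQy₀ : y₀ ⬝ᵥ D *ᵥ y₀ = μ * (y₀ ⬝ᵥ y₀) := by rw [hy₀1, mul_one]
  -- Pareto inequality for y₀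
  have hpt : ∀ i, μ * y₀ i ≤ (D *ᵥ y₀) i := by
    intro i
    by_cases hiv : i = v
    · rw [hiv, hy₀v, mul_zero]
      show (0:ℝ) ≤ ∑ j, D v j * y₀ j
      exact Finset.sum_nonneg fun j _ => mul_nonneg (hnn v j) (hy₀n j)
    · rcases (hy₀n i).eq_or_lt with h0 | hposi
      · rw [← h0, mul_zero]
        show (0:ℝ) ≤ ∑ j, D i j * y₀ j
        exact Finset.sum_nonneg fun j _ => mul_nonneg (hnn i j) (hy₀n j)
      · exact le_of_eq (first_order hsym hL2 y₀ hy₀n hy₀v hQy₀ i hiv (hdiag i) hposi).symm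
  have hy₀ne : y₀ ≠ 0 := by
    intro h
    rw [h] at hy₀1
    simp at hy₀1
  have hμS : μ ∈ distParetoSet G := by
    show IsParetoEigenvalue D μ
    exact ⟨y₀, hy₀ne, hy₀n, hpt, by rw [hy₀1, div_one]⟩
  -- every Pareto eigenvalue is at most ρ1
  have hub : ∀ lam ∈ distParetoSet G, lam ≤ ρ1 := by
    intro lam hlam
    obtain ⟨y, hyne, hyn, hineq, _⟩ := hlam
    have hxy : 0 < x ⬝ᵥ y := by
      have hexy : ∃ i, y i ≠ 0 := by
        by_contra hA
        push_neg at hA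
        exact hyne (funext hA)
      obtain ⟨i0, hi0⟩ := hexy
      have hyi0 : 0 < y i0 := (hyn i0).lt_of_ne (Ne.symm hi0)
      have h2 : x i0 * y i0 ≤ ∑ j, x j * y j :=
        Finset.single_le_sum (fun j _ => mul_nonneg (hpos j).le (hyn j)) (Finset.mem_univ i0)
      have h3 : 0 < x i0 * y i0 := mul_pos (hpos i0) hyi0
      calc (0:ℝ) < x i0 * y i0 := h3
        _ ≤ ∑ j, x j * y j := h2
        _ = x ⬝ᵥ y := rfl
    have h4 : lam * (x ⬝ᵥ y) ≤ x ⬝ᵥ (D *ᵥ y) := by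
      have h5 : ∀ i, x i * (lam * y i) ≤ x i * ((D *ᵥ y) i) :=
        fun i => mul_le_mul_of_nonneg_left (hineq i) (hpos i).le
      calc lam * (x ⬝ᵥ y) = ∑ i, x i * (lam * y i) := by
            simp only [dotProduct, Finset.mul_sum]
            exact Finset.sum_congr rfl fun i _ => by ring
        _ ≤ ∑ i, x i * ((D *ᵥ y) i) := Finset.sum_le_sum fun i _ => h5 i
        _ = x ⬝ᵥ (D *ᵥ y) := rfl
    have h5 : x ⬝ᵥ (D *ᵥ y) = ρ1 * (x ⬝ᵥ y) := by
      rw [dot_mulVec_comm' hsym, heig, dotProduct_smul, smul_eq_mul, dotProduct_comm]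
    rw [h5] at h4
    exact (mul_le_mul_iff_left₀ hxy).mp h4
  have hρ1S : ρ1 ∈ distParetoSet G := hρ1.1
  have hρ2S : ρ2 ∈ distParetoSet G := hρ2.1
  have hρ2n : ∃ a, {z ∈ distParetoSet G | ρ2 < z} = {a} := by
    have h := hρ2.2
    norm_num [Set.ncard_eq_one] at h
    exact h
  have hρ2lt : ρ2 < ρ1 := by
    rcases lt_or_ge ρ2 ρ1 with h | h
    · exact h
    · exfalso
      have he : ρ1 ≤ ρ2 := h
      have hempty : {z ∈ distParetoSet G | ρ2 < z} = ∅ := by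
        ext z
        simp only [Set.mem_setOf_eq, Set.mem_empty_iff_false, iff_false, not_and]
        intro hz1
        exact not_lt.mpr (le_trans (hub z hz1) he)
      obtain ⟨a, ha⟩ := hρ2n
      rw [hempty] at ha
      exact (Set.singleton_ne_empty a) ha.symm
  have hbelow : ∀ lam ∈ distParetoSet G, lam ≠ ρ1 → lam ≤ ρ2 := by
    intro lam hlam hne
    by_contra hgt
    push_neg at hgt
    obtain ⟨a, ha⟩ := hρ2n
    have hlam_mem : lam ∈ {z ∈ distParetoSet G | ρ2 < z} := ⟨hlam, hgt⟩
    have hρ1_mem : ρ1 ∈ {z ∈ distParetoSet G | ρ2 < z} := ⟨hρ1S, hρ2lt⟩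
    rw [ha] at hlam_mem hρ1_mem
    simp only [Set.mem_singleton_iff] at hlam_mem hρ1_mem
    exact hne (hlam_mem.trans hρ1_mem.symm)
  -- μ ≠ ρ1
  have hμρ1 : μ ≠ ρ1 := by
    intro hμeq
    have hsum : ∑ i, x i * ((D *ᵥ y₀) i - μ * y₀ i) = 0 := by
      have e1 : ∑ i, x i * ((D *ᵥ y₀) i - μ * y₀ i)
          = x ⬝ᵥ (D *ᵥ y₀) - μ * (x ⬝ᵥ y₀) := by
        simp only [mul_sub, dotProduct, Finset.mul_sum]
        rw [Finset.sum_sub_distrib]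
        congr 1
        exact Finset.sum_congr rfl fun i _ => by ring
      rw [e1, dot_mulVec_comm' hsym, heig, dotProduct_smul, smul_eq_mul,
        dotProduct_comm y₀ x, hμeq]
      ring
    have hterm : ∀ i ∈ Finset.univ, (0:ℝ) ≤ x i * ((D *ᵥ y₀) i - μ * y₀ i) :=
      fun i _ => mul_nonneg (hpos i).le (by linarith [hpt i])
    have hzero := (Finset.sum_eq_zero_iff_of_nonneg hterm).mp hsum
    have heqq : ∀ i, (D *ᵥ y₀) i = μ * y₀ i := by
      intro i
      have hz := hzero i (Finset.mem_univ i)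
      rcases mul_eq_zero.mp hz with h | h
      · exact absurd h (ne_of_gt (hpos i))
      · linarith
    have hv0 : ∑ j, D v j * y₀ j = 0 := by
      have hq := heqq v
      rw [hy₀v, mul_zero] at hq
      exact hq
    have hall := (Finset.sum_eq_zero_iff_of_nonneg
      (fun j _ => mul_nonneg (hnn v j) (hy₀n j))).mp hv0
    have hy0 : y₀ = 0 := by
      funext j
      by_cases hj : j = v
      · rw [hj, hy₀v]; rfl
      · have hz := hall j (Finset.mem_univ j)
        rcases mul_eq_zero.mp hz with h | h
        · exact absurd h (by have := hone v j (fun hh => hj hh.symm); intro hc; rw [hc] at this; linarith)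
        · rw [h]; rfl
    exact hy₀ne hy0
  have hμρ2 : μ ≤ ρ2 := hbelow μ hμS hμρ1
  -- key inequality
  have hmain : ρ1 * (1 - 2*t) ≤ μ * (1 - t) := by
    have := hL2 w hwn hwv
    rwa [hQw, hNw] at this
  have hkey : ρ1 * (1 - 2*t) ≤ ρ2 * (1 - t) :=
    le_trans hmain (mul_le_mul_of_nonneg_right hμρ2 h1t.le)
  have hρ2pos : 0 < ρ2 := by
    nlinarith [mul_pos hρ1pos ht2]
  have hρ12 : 0 < ρ1 - ρ2 := by linarith
  have h2ρ : 0 < 2*ρ1 - ρ2 := by linarith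
  obtain ⟨P, hPdef⟩ : ∃ P : ℝ, P = (ρ1 - ρ2) * (2 * ρ1 - ρ2) := ⟨_, rfl⟩
  rw [← hPdef]
  have hP : 0 < P := by rw [hPdef]; exact mul_pos hρ12 (by linarith)
  have hsP : 0 < Real.sqrt P := Real.sqrt_pos.mpr hP
  have hsP2 : Real.sqrt P ^ 2 = P := Real.sq_sqrt hP.le
  refine ⟨by rw [div_le_div_iff₀ hρ2pos ht2]; nlinarith [hkey], ?_, ?_⟩
  · -- forward: equality → formula
    intro heqr u huv
    have hcross : ρ1 * (1 - 2*t) = (1 - t) * ρ2 := (div_eq_div_iff (ne_of_gt hρ2pos) (ne_of_gt ht2)).mp heqr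
    have hμeq2 : μ * (1 - t) = ρ2 * (1 - t) := by
      refine le_antisymm (mul_le_mul_of_nonneg_right hμρ2 h1t.le) ?_
      nlinarith [hmain]
    have hμval : μ = ρ2 := mul_right_cancel₀ (ne_of_gt h1t) hμeq2
    have hQweq : w ⬝ᵥ D *ᵥ w = μ * (w ⬝ᵥ w) := by
      rw [hQw, hNw, hμval]
      linear_combination hcross
    have hwu : 0 < w u := by rw [hwi u huv]; exact hpos u
    have h6 : (D *ᵥ w) u = ρ2 * x u := by
      rw [first_order hsym hL2 w hwn hwv hQweq u huv (hdiag u) hwu, hμval, hwi u huv]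
    have hx_eq : x = w + (x v) • (Pi.single v 1 : Fin n → ℝ) := by
      rw [hwdef0, sub_add_cancel]
    have h7 : (D *ᵥ x) u = (D *ᵥ w) u + x v * D u v := by
      conv_lhs => rw [hx_eq]
      rw [Matrix.mulVec_add, Matrix.mulVec_smul, Matrix.mulVec_single]
      simp [mul_comm]
    have h8 : (ρ1 - ρ2) * x u = x v * D u v := by
      have h9 := heigp u
      rw [h7, h6] at h9
      linear_combination -h9
    have htrel : t * (2*ρ1 - ρ2) = ρ1 - ρ2 := by linear_combination -hcross
    have hsq : (x v * Real.sqrt P)^2 = (ρ1 - ρ2)^2 := by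
      rw [mul_pow, hsP2, ← ht, hPdef]
      linear_combination (ρ1 - ρ2) * htrel
    have hxvP : x v * Real.sqrt P = ρ1 - ρ2 := by
      have hfac : (x v * Real.sqrt P - (ρ1-ρ2)) * (x v * Real.sqrt P + (ρ1-ρ2)) = 0 := by
        linear_combination hsq
      rcases mul_eq_zero.mp hfac with h | h
      · linarith
      · exfalso
        have hxvpos : 0 < x v * Real.sqrt P := mul_pos (hpos v) hsP
        linarith
    rw [eq_div_iff (ne_of_gt hsP)]
    have h10 : x v * (x u * Real.sqrt P) = x v * D u v := by
      rw [← hxvP] at h8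
      linear_combination h8
    have h11 := mul_left_cancel₀ (ne_of_gt (hpos v)) h10
    rw [h11]
    rfl
  · -- backward: formula → equality
    intro hform
    obtain ⟨S, hS⟩ : ∃ S : ℝ, S = ∑ j, (D v j)^2 := ⟨_, rfl⟩
    have hrowv : ρ1 * x v * Real.sqrt P = S := by
      have h1 : ∀ j, D v j * x j * Real.sqrt P = (D v j)^2 := by
        intro j
        by_cases hj : j = v
        · rw [hj, hdiag v]; ring
        · have hc : (G.dist j v : ℝ) = D v j := by
            rw [hsym v j]; rfl
          rw [hform j hj, hc]
          field_simp
      have h2 : (∑ j, D v j * x j) = ρ1 * x v := heigp v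
      have h3 : S = (∑ j, D v j * x j) * Real.sqrt P := by
        rw [hS, Finset.sum_mul]
        exact Finset.sum_congr rfl fun j _ => (h1 j).symm
      rw [h3, h2]
    have hunit2 : P = t * P + S := by
      have h1 : ∀ j, x j * x j * P = (D v j)^2 + (if j = v then t*P else 0) := by
        intro j
        by_cases hj : j = v
        · rw [if_pos hj, hj, hdiag v, ht]; ring
        · rw [if_neg hj]
          have hc : (G.dist j v : ℝ) = D v j := by
            rw [hsym v j]; rfl
          have hss : Real.sqrt P * Real.sqrt P = P := Real.mul_self_sqrt hP.le
          rw [hform j hj, hc, add_zero, div_mul_div_comm, hss,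
            div_mul_cancel₀ _ (ne_of_gt hP)]
          ring
      have h2 : (∑ j, x j * x j) = 1 := hunit
      calc P = (∑ j, x j * x j) * P := by rw [h2, one_mul]
        _ = ∑ j, x j * x j * P := by rw [Finset.sum_mul]
        _ = ∑ j, ((D v j)^2 + (if j = v then t*P else 0)) :=
              Finset.sum_congr rfl fun j _ => h1 j
        _ = S + ∑ j, (if j = v then t*P else 0) := by
              rw [Finset.sum_add_distrib, ← hS]
        _ = S + t*P := by rw [Finset.sum_ite_eq' Finset.univ v (fun _ => t*P)]; simp
        _ = t*P + S := add_comm _ _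
    have hSnn : 0 ≤ S := by
      rw [hS]
      exact Finset.sum_nonneg fun j _ => sq_nonneg _
    have hs2 : S^2 = ρ1^2 * t * P := by
      rw [← hrowv, ht, mul_pow, mul_pow, hsP2]
    have hquad : ρ1^2 * P = S^2 + ρ1^2 * S := by
      linear_combination ρ1^2 * hunit2 - hs2
    have hSval : S = ρ1 * (ρ1 - ρ2) := by
      have hfac : (S - ρ1*(ρ1-ρ2)) * (S + ρ1*(2*ρ1-ρ2)) = 0 := by
        rw [hPdef] at hquad
        linear_combination -hquad
      rcases mul_eq_zero.mp hfac with h | h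
      · linarith
      · exfalso
        linarith [mul_pos hρ1pos h2ρ, hSnn]
    have hTP : ρ1^2 * (t * P) = ρ1^2 * ((ρ1-ρ2)^2) := by
      rw [hSval] at hs2
      linear_combination -hs2
    have hTP2 : t * P = (ρ1-ρ2)^2 :=
      mul_left_cancel₀ (by positivity) hTP
    have htval : t * (2*ρ1 - ρ2) = ρ1 - ρ2 := by
      have h1 : (ρ1-ρ2) * (t * (2*ρ1-ρ2)) = (ρ1-ρ2) * (ρ1-ρ2) := by
        rw [hPdef] at hTP2
        linear_combination hTP2
      have := mul_left_cancel₀ (ne_of_gt hρ12) h1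
      linarith
    rw [div_eq_div_iff (ne_of_gt hρ2pos) (ne_of_gt ht2)]
    linear_combination -htval
end

section
/- If G is a connected graph on n ≥ 3 vertices, then ρ₁(G)/ρ₂(G) ≤ (n−1)/(n−2), and equality holds if and only if G is the complete graph K_n. -/
open Matrix SimpleGraph

namespace Stmt10Aux

variable {n : ℕ}

lemma dot_self_pos {x : Fin n → ℝ} (hx : x ≠ 0) : 0 < x ⬝ᵥ x := by
  have h1 : 0 ≤ x ⬝ᵥ x := by
    apply Finset.sum_nonneg
    intro i _
    exact mul_self_nonneg _
  rcases h1.lt_or_eq with h | h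
  · exact h
  · exfalso
    apply hx
    funext i
    have := (Finset.sum_eq_zero_iff_of_nonneg (by intro j _; exact mul_self_nonneg (x j))).mp h.symm i (Finset.mem_univ i)
    simpa [mul_self_eq_zero] using this

lemma dot_mulVec_comm (A : Matrix (Fin n) (Fin n) ℝ) (hA : ∀ i j, A i j = A j i)
    (x y : Fin n → ℝ) : x ⬝ᵥ A.mulVec y = y ⬝ᵥ A.mulVec x := by
  simp only [dotProduct, mulVec, Finset.mul_sum]
  rw [Finset.sum_comm]
  apply Finset.sum_congr rfl
  intro i _
  apply Finset.sum_congr rfl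
  intro j _
  rw [hA j i]
  ring

lemma quad_coeff_zero {c d : ℝ} (hd : 0 ≤ d) (h : ∀ t : ℝ, 0 ≤ 2 * t * c + t ^ 2 * d) :
    c = 0 := by
  have key : ∀ ε : ℝ, 0 < ε → |2 * c| ≤ ε * d := by
    intro ε hε
    have h1 := h ε
    have h2 := h (-ε)
    rw [abs_le]
    constructor <;> nlinarith
  by_contra hc
  have h2c : 0 < |2 * c| := by positivity
  have hk := key (|2 * c| / (2 * (d + 1))) (by positivity)
  have hd1 : 0 < d + 1 := by linarith
  have : |2 * c| / (2 * (d + 1)) * d < |2 * c| := by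
    rw [div_mul_eq_mul_div, div_lt_iff₀ (by positivity)]
    nlinarith
  linarith

end Stmt10Aux

namespace Stmt10Aux

variable {n : ℕ}

lemma cont_q (A : Matrix (Fin n) (Fin n) ℝ) : Continuous fun x : Fin n → ℝ => x ⬝ᵥ A.mulVec x := by
  have : (fun x : Fin n → ℝ => x ⬝ᵥ A.mulVec x)
      = fun x => ∑ i, ∑ j, x i * (A i j * x j) := by
    funext x
    simp [dotProduct, Matrix.mulVec, Finset.mul_sum]
  rw [this]
  fun_prop

lemma cont_dot : Continuous fun x : Fin n → ℝ => x ⬝ᵥ x := by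
  unfold dotProduct
  fun_prop

lemma abs_quad_le (A : Matrix (Fin n) (Fin n) ℝ) (hnn : ∀ i j, 0 ≤ A i j) (x : Fin n → ℝ) :
    x ⬝ᵥ A.mulVec x ≤ (fun i => |x i|) ⬝ᵥ A.mulVec (fun i => |x i|) := by
  simp only [dotProduct, Matrix.mulVec, Finset.mul_sum]
  apply Finset.sum_le_sum
  intro i _
  apply Finset.sum_le_sum
  intro j _
  calc x i * (A i j * x j) ≤ |x i * (A i j * x j)| := le_abs_self _
    _ = |x i| * (A i j * |x j|) := by
        rw [abs_mul, abs_mul, abs_of_nonneg (hnn i j)]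

lemma exists_smax (A : Matrix (Fin n) (Fin n) ℝ) (hnn : ∀ i j, 0 ≤ A i j)
    (S : Set (Fin n)) (i0 : Fin n) (hi0 : i0 ∈ S) :
    ∃ (μ : ℝ) (x : Fin n → ℝ), (∀ i, 0 ≤ x i) ∧ x ⬝ᵥ x = 1 ∧ (∀ i, i ∉ S → x i = 0) ∧
      x ⬝ᵥ A.mulVec x = μ ∧
      (∀ y : Fin n → ℝ, (∀ i, i ∉ S → y i = 0) → y ⬝ᵥ A.mulVec y ≤ μ * (y ⬝ᵥ y)) := by
  classical
  set K : Set (Fin n → ℝ) := {x | x ⬝ᵥ x = 1} ∩ {x | ∀ i, i ∉ S → x i = 0} with hK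
  have hKc : IsClosed K := by
    apply IsClosed.inter
    · exact isClosed_eq cont_dot continuous_const
    · have : {x : Fin n → ℝ | ∀ i, i ∉ S → x i = 0} = ⋂ i, {x : Fin n → ℝ | i ∉ S → x i = 0} := by
        ext x; simp
      rw [this]
      apply isClosed_iInter
      intro i
      by_cases hi : i ∈ S
      · convert isClosed_univ
        ext x; simp [hi]
      · have : {x : Fin n → ℝ | i ∉ S → x i = 0} = {x : Fin n → ℝ | x i = 0} := by
          ext x; simp [hi]
        rw [this]
        exact isClosed_eq (continuous_apply i) continuous_const
  have hKb : Bornology.IsBounded K := by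
    apply (Metric.isBounded_closedBall (x := (0 : Fin n → ℝ)) (r := 1)).subset
    intro x hx
    simp only [Metric.mem_closedBall, dist_zero_right]
    rw [pi_norm_le_iff_of_nonneg zero_le_one]
    intro i
    rw [Real.norm_eq_abs, ← Real.sqrt_one, ← Real.sqrt_sq_eq_abs]
    apply Real.sqrt_le_sqrt
    have h1 : x ⬝ᵥ x = 1 := hx.1
    have : x i ^ 2 ≤ x ⬝ᵥ x := by
      rw [dotProduct]
      have h2 := Finset.single_le_sum (f := fun j => x j * x j)
        (fun j _ => mul_self_nonneg (x j)) (Finset.mem_univ i)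
      nlinarith [h2]
    linarith
  have hKcomp : IsCompact K := Metric.isCompact_of_isClosed_isBounded hKc hKb
  have hKne : K.Nonempty := by
    refine ⟨Pi.single i0 1, ?_, ?_⟩
    · simp [single_dotProduct]
    · intro i hi
      apply Pi.single_eq_of_ne
      rintro rfl
      exact hi hi0
  obtain ⟨x0, hx0K, hx0max⟩ := hKcomp.exists_isMaxOn hKne (cont_q A).continuousOn
  set x : Fin n → ℝ := fun i => |x0 i| with hxdef
  have hxK : x ∈ K := by
    constructor
    · show x ⬝ᵥ x = 1
      have : x ⬝ᵥ x = x0 ⬝ᵥ x0 := by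
        apply Finset.sum_congr rfl
        intro i _
        simp [hxdef, abs_mul_abs_self]
      rw [this]; exact hx0K.1
    · intro i hi
      simp [hxdef, hx0K.2 i hi]
  have hxmax : ∀ y ∈ K, y ⬝ᵥ A.mulVec y ≤ x ⬝ᵥ A.mulVec x := by
    intro y hy
    calc y ⬝ᵥ A.mulVec y ≤ x0 ⬝ᵥ A.mulVec x0 := hx0max hy
      _ ≤ x ⬝ᵥ A.mulVec x := abs_quad_le A hnn x0
  refine ⟨x ⬝ᵥ A.mulVec x, x, fun i => abs_nonneg _, hxK.1, hxK.2, rfl, ?_⟩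
  intro y hy
  rcases eq_or_ne y 0 with rfl | hy0
  · simp
  · have hc : 0 < y ⬝ᵥ y := dot_self_pos hy0
    set c := Real.sqrt (y ⬝ᵥ y) with hcdef
    have hcpos : 0 < c := Real.sqrt_pos.mpr hc
    set z : Fin n → ℝ := c⁻¹ • y with hzdef
    have hzK : z ∈ K := by
      constructor
      · show z ⬝ᵥ z = 1
        rw [hzdef, smul_dotProduct, dotProduct_smul, smul_eq_mul, smul_eq_mul]
        rw [← mul_assoc]
        rw [← mul_inv]
        rw [hcdef, Real.mul_self_sqrt hc.le]
        field_simp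
      · intro i hi
        simp [hzdef, hy i hi]
    have := hxmax z hzK
    rw [hzdef, smul_dotProduct, Matrix.mulVec_smul, dotProduct_smul,
      smul_eq_mul, smul_eq_mul, ← mul_assoc, ← mul_inv, hcdef, Real.mul_self_sqrt hc.le] at this
    calc y ⬝ᵥ A.mulVec y = (y ⬝ᵥ y) * ((y ⬝ᵥ y)⁻¹ * (y ⬝ᵥ A.mulVec y)) := by
          field_simp
      _ ≤ (y ⬝ᵥ y) * (x ⬝ᵥ A.mulVec x) := by
          apply mul_le_mul_of_nonneg_left this hc.le
      _ = x ⬝ᵥ A.mulVec x * (y ⬝ᵥ y) := by ring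

end Stmt10Aux

namespace Stmt10Aux

variable {n : ℕ}

lemma eigen_of_max (A : Matrix (Fin n) (Fin n) ℝ) (hA : ∀ i j, A i j = A j i)
    (S : Set (Fin n)) (μ : ℝ) (x : Fin n → ℝ)
    (hx1 : x ⬝ᵥ x = 1) (hxS : ∀ i, i ∉ S → x i = 0) (hxq : x ⬝ᵥ A.mulVec x = μ)
    (hmax : ∀ y : Fin n → ℝ, (∀ i, i ∉ S → y i = 0) → y ⬝ᵥ A.mulVec y ≤ μ * (y ⬝ᵥ y)) :
    ∀ i, i ∈ S → A.mulVec x i = μ * x i := by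
  classical
  intro i hiS
  set y : Fin n → ℝ := Pi.single i 1 with hydef
  have hyS : ∀ j, j ∉ S → y j = 0 := by
    intro j hj
    apply Pi.single_eq_of_ne
    rintro rfl
    exact hj hiS
  have hd : 0 ≤ μ * (y ⬝ᵥ y) - y ⬝ᵥ A.mulVec y := by
    have := hmax y hyS
    linarith
  have key : ∀ t : ℝ, 0 ≤ 2 * t * (μ * x i - A.mulVec x i)
      + t ^ 2 * (μ * (y ⬝ᵥ y) - y ⬝ᵥ A.mulVec y) := by
    intro t
    have hz := hmax (x + t • y) (by
      intro j hj
      simp [hxS j hj, hyS j hj])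
    have hexp1 : (x + t • y) ⬝ᵥ A.mulVec (x + t • y)
        = x ⬝ᵥ A.mulVec x + 2 * t * (y ⬝ᵥ A.mulVec x) + t ^ 2 * (y ⬝ᵥ A.mulVec y) := by
      rw [Matrix.mulVec_add, Matrix.mulVec_smul]
      simp only [add_dotProduct, dotProduct_add, smul_dotProduct,
        dotProduct_smul, smul_eq_mul]
      rw [dot_mulVec_comm A hA x y]
      ring
    have hexp2 : (x + t • y) ⬝ᵥ (x + t • y) = x ⬝ᵥ x + 2 * t * (y ⬝ᵥ x) + t ^ 2 * (y ⬝ᵥ y) := by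
      simp only [add_dotProduct, dotProduct_add, smul_dotProduct,
        dotProduct_smul, smul_eq_mul]
      have : x ⬝ᵥ y = y ⬝ᵥ x := dotProduct_comm x y
      rw [this]
      ring
    rw [hexp1, hexp2, hxq, hx1] at hz
    have hyAx : y ⬝ᵥ A.mulVec x = A.mulVec x i := by
      rw [hydef, single_dotProduct, one_mul]
    have hyx : y ⬝ᵥ x = x i := by
      rw [hydef, single_dotProduct, one_mul]
    rw [hyAx, hyx] at hz
    nlinarith [hz]
  have := quad_coeff_zero hd key
  linarith

lemma support_eigen (A : Matrix (Fin n) (Fin n) ℝ) (lam : ℝ) (x : Fin n → ℝ)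
    (h : IsParetoEigenpair A lam x) : ∀ i, x i ≠ 0 → A.mulVec x i = lam * x i := by
  classical
  obtain ⟨hx0, hxnn, hxineq, hxray⟩ := h
  have hdot : 0 < x ⬝ᵥ x := dot_self_pos hx0
  have hsum : ∑ i, x i * (A.mulVec x i - lam * x i) = 0 := by
    have : x ⬝ᵥ A.mulVec x = lam * (x ⬝ᵥ x) := by
      field_simp at hxray
      linarith [hxray]
    simp only [mul_sub]
    rw [Finset.sum_sub_distrib]
    have e1 : ∑ i, x i * A.mulVec x i = x ⬝ᵥ A.mulVec x := rfl
    have e2 : ∑ i, x i * (lam * x i) = lam * (x ⬝ᵥ x) := by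
      rw [dotProduct, Finset.mul_sum]
      apply Finset.sum_congr rfl
      intro i _
      ring
    rw [e1, e2, this, sub_self]
  have hterm : ∀ i ∈ Finset.univ, (0:ℝ) ≤ x i * (A.mulVec x i - lam * x i) := by
    intro i _
    apply mul_nonneg (hxnn i)
    linarith [hxineq i]
  intro i hxi
  have := (Finset.sum_eq_zero_iff_of_nonneg hterm).mp hsum i (Finset.mem_univ i)
  have hxipos : 0 < x i := lt_of_le_of_ne (hxnn i) (Ne.symm hxi)
  have : A.mulVec x i - lam * x i = 0 := by
    by_contra h
    have h2 : 0 < A.mulVec x i - lam * x i := lt_of_le_of_ne (by linarith [hxineq i]) (Ne.symm h)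
    nlinarith
  linarith

end Stmt10Aux

namespace Stmt10Aux

variable {n : ℕ}

lemma charpoly_root_of_eigen (M : Matrix (Fin n) (Fin n) ℝ) (lam : ℝ) (x : Fin n → ℝ)
    (hx : x ≠ 0) (h : M.mulVec x = lam • x) : M.charpoly.IsRoot lam := by
  classical
  have hker : (lam • (1 : Matrix (Fin n) (Fin n) ℝ) - M).mulVec x = 0 := by
    rw [Matrix.sub_mulVec, Matrix.smul_mulVec, Matrix.one_mulVec, h, sub_self]
  have hdet : (lam • (1 : Matrix (Fin n) (Fin n) ℝ) - M).det = 0 :=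
    Matrix.exists_mulVec_eq_zero_iff.mp ⟨x, hx, hker⟩
  have hmap : (Matrix.charmatrix M).map (Polynomial.eval lam)
      = lam • (1 : Matrix (Fin n) (Fin n) ℝ) - M := by
    ext i j
    by_cases hij : i = j
    · subst hij
      simp [Matrix.charmatrix_apply, Matrix.map_apply, Matrix.one_apply]
    · simp [Matrix.charmatrix_apply, Matrix.map_apply, Matrix.one_apply, hij,
        Matrix.diagonal_apply_ne _ hij]
  have : Polynomial.eval lam M.charpoly
      = ((Matrix.charmatrix M).map (Polynomial.eval lam)).det := by
    rw [Matrix.charpoly]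
    exact RingHom.map_det (Polynomial.evalRingHom lam) (Matrix.charmatrix M)
  rw [Polynomial.IsRoot, this, hmap, hdet]

lemma pareto_finite (A : Matrix (Fin n) (Fin n) ℝ) :
    {lam | IsParetoEigenvalue A lam}.Finite := by
  classical
  set M : Finset (Fin n) → Matrix (Fin n) (Fin n) ℝ :=
    fun s => fun i j => if i ∈ s ∧ j ∈ s then A i j else 0 with hM
  have hsub : {lam | IsParetoEigenvalue A lam}
      ⊆ ⋃ s : Finset (Fin n), {t : ℝ | (M s).charpoly.IsRoot t} := by
    rintro lam ⟨x, hpair⟩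
    have hsupp := support_eigen A lam x hpair
    set s : Finset (Fin n) := Finset.univ.filter (fun i => x i ≠ 0) with hs
    have hxs : ∀ j, j ∉ s → x j = 0 := by
      intro j hj
      by_contra h
      exact hj (by simp [hs, h])
    have heig : (M s).mulVec x = lam • x := by
      funext i
      by_cases hi : i ∈ s
      · have hxi : x i ≠ 0 := by
          have := Finset.mem_filter.mp hi
          exact this.2
        have : (M s).mulVec x i = A.mulVec x i := by
          simp only [Matrix.mulVec, dotProduct]
          apply Finset.sum_congr rfl
          intro j _
          by_cases hj : j ∈ s
          · simp [hM, hi, hj]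
          · simp [hM, hxs j hj]
        rw [this, hsupp i hxi]
        simp
      · have hxi : x i = 0 := hxs i hi
        have : (M s).mulVec x i = 0 := by
          simp only [Matrix.mulVec, dotProduct]
          apply Finset.sum_eq_zero
          intro j _
          simp [hM, hi]
        rw [this]
        simp [hxi]
    exact Set.mem_iUnion.mpr ⟨s, charpoly_root_of_eigen (M s) lam x hpair.1 heig⟩
  apply Set.Finite.subset _ hsub
  apply Set.finite_iUnion
  intro s
  exact Polynomial.finite_setOf_isRoot ((M s).charpoly_monic.ne_zero)

lemma kth_unique {S : Set ℝ} (hfin : S.Finite) {k : ℕ} {a b : ℝ}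
    (ha : IsKthLargest S k a) (hb : IsKthLargest S k b) : a = b := by
  by_contra hne
  wlog hab : a < b generalizing a b
  · exact this hb ha (Ne.symm hne) (lt_of_le_of_ne (not_lt.mp hab) (Ne.symm hne))
  have hsub : {x ∈ S | b < x} ⊂ {x ∈ S | a < x} := by
    constructor
    · intro x hx
      exact ⟨hx.1, lt_trans hab hx.2⟩
    · intro hcon
      have : b ∈ {x ∈ S | b < x} := hcon ⟨hb.1, hab⟩
      exact lt_irrefl b this.2
  have := Set.ncard_lt_ncard hsub (hfin.subset (fun x hx => hx.1))
  rw [ha.2, hb.2] at this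
  exact lt_irrefl _ this

lemma isKthLargest_one_of_max {S : Set ℝ} {m : ℝ} (hm : m ∈ S)
    (hmax : ∀ x ∈ S, x ≤ m) : IsKthLargest S 1 m := by
  refine ⟨hm, ?_⟩
  have : {x ∈ S | m < x} = ∅ := by
    ext x
    simp only [Set.mem_setOf_eq, Set.mem_empty_iff_false, iff_false, not_and, not_lt]
    intro hx
    exact hmax x hx
  rw [this]
  simp

lemma kth2_facts {S : Set ℝ} (hfin : S.Finite) {ρ1 ρ2 : ℝ}
    (h1 : IsKthLargest S 1 ρ1) (h2 : IsKthLargest S 2 ρ2) :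
    ρ2 < ρ1 ∧ ∀ lam ∈ S, lam ≠ ρ1 → lam ≤ ρ2 := by
  have hmax : ∀ x ∈ S, x ≤ ρ1 := by
    intro x hx
    by_contra h
    have hemp : {y ∈ S | ρ1 < y}.ncard = 0 := h1.2
    have hxin : x ∈ {y ∈ S | ρ1 < y} := ⟨hx, not_le.mp h⟩
    have : {y ∈ S | ρ1 < y}.Finite := hfin.subset (fun y hy => hy.1)
    have := (Set.ncard_eq_zero this).mp hemp
    rw [this] at hxin
    exact hxin
  have hT : {x ∈ S | ρ2 < x}.ncard = 1 := h2.2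
  obtain ⟨c, hc⟩ := (Set.ncard_eq_one).mp hT
  have hcmem : c ∈ {x ∈ S | ρ2 < x} := by rw [hc]; rfl
  have h21 : ρ2 < ρ1 := lt_of_lt_of_le hcmem.2 (hmax c hcmem.1)
  have hρ1T : ρ1 ∈ {x ∈ S | ρ2 < x} := ⟨h1.1, h21⟩
  rw [hc] at hρ1T
  refine ⟨h21, ?_⟩
  intro lam hlam hne
  by_contra h
  have : lam ∈ {x ∈ S | ρ2 < x} := ⟨hlam, not_le.mp h⟩
  rw [hc] at this
  rw [Set.mem_singleton_iff] at this hρ1T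
  exact hne (this.trans hρ1T.symm)

end Stmt10Aux

namespace Stmt10Aux

variable {n : ℕ}

lemma pareto_of_S (A : Matrix (Fin n) (Fin n) ℝ) (hA : ∀ i j, A i j = A j i)
    (hnn : ∀ i j, 0 ≤ A i j) (S : Set (Fin n)) (i0 : Fin n) (hi0 : i0 ∈ S) :
    ∃ (μ : ℝ) (x : Fin n → ℝ), IsParetoEigenpair A μ x ∧ (∀ i, 0 ≤ x i) ∧ x ⬝ᵥ x = 1 ∧
      (∀ i, i ∉ S → x i = 0) ∧ (∀ i, i ∈ S → A.mulVec x i = μ * x i) ∧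
      (∀ y : Fin n → ℝ, (∀ i, i ∉ S → y i = 0) → y ⬝ᵥ A.mulVec y ≤ μ * (y ⬝ᵥ y)) := by
  obtain ⟨μ, x, hxnn, hx1, hxS, hxq, hmax⟩ := exists_smax A hnn S i0 hi0
  have heig := eigen_of_max A hA S μ x hx1 hxS hxq hmax
  have hx0 : x ≠ 0 := by
    intro h
    rw [h] at hx1
    simp [dotProduct] at hx1
  refine ⟨μ, x, ⟨hx0, hxnn, ?_, ?_⟩, hxnn, hx1, hxS, heig, hmax⟩
  · intro i
    by_cases hi : i ∈ S
    · rw [heig i hi]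
    · rw [hxS i hi, mul_zero]
      show (0:ℝ) ≤ ∑ j, A i j * x j
      apply Finset.sum_nonneg
      intro j _
      exact mul_nonneg (hnn i j) (hxnn j)
  · rw [hxq, hx1, div_one]

lemma distMatrix_symm {G : SimpleGraph (Fin n)} (i j : Fin n) :
    distMatrix G i j = distMatrix G j i := by
  simp [distMatrix, SimpleGraph.dist_comm]

lemma distMatrix_nonneg {G : SimpleGraph (Fin n)} (i j : Fin n) : 0 ≤ distMatrix G i j := by
  simp [distMatrix]

lemma distMatrix_diag {G : SimpleGraph (Fin n)} (i : Fin n) : distMatrix G i i = 0 := by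
  simp [distMatrix]

lemma distMatrix_one_le {G : SimpleGraph (Fin n)} (hG : G.Connected) {i j : Fin n}
    (hij : i ≠ j) : 1 ≤ distMatrix G i j := by
  have := hG.pos_dist_of_ne hij
  simp only [distMatrix]
  exact_mod_cast this

end Stmt10Aux

namespace Stmt10Aux

variable {n : ℕ}

lemma dist_top {i j : Fin n} (hij : i ≠ j) :
    (⊤ : SimpleGraph (Fin n)).dist i j = 1 :=
  SimpleGraph.dist_eq_one_iff_adj.mpr (by simp [hij])

lemma mulVec_top (x : Fin n → ℝ) (i : Fin n) :
    (distMatrix (⊤ : SimpleGraph (Fin n))).mulVec x i = (∑ j, x j) - x i := by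
  show ∑ j, distMatrix (⊤ : SimpleGraph (Fin n)) i j * x j = (∑ j, x j) - x i
  have h : ∀ j, distMatrix (⊤ : SimpleGraph (Fin n)) i j * x j
      = x j - (if j = i then x j else 0) := by
    intro j
    by_cases hj : j = i
    · subst hj
      simp [distMatrix]
    · rw [distMatrix]
      rw [dist_top (Ne.symm hj)]
      simp [hj]
  rw [Finset.sum_congr rfl (fun j _ => h j), Finset.sum_sub_distrib,
    Finset.sum_ite_eq' Finset.univ i x]
  simp

lemma top_pareto_form (lam : ℝ)
    (h : lam ∈ distParetoSet (⊤ : SimpleGraph (Fin n))) :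
    ∃ k : ℕ, 1 ≤ k ∧ k ≤ n ∧ lam = (k : ℝ) - 1 := by
  classical
  obtain ⟨x, hpair⟩ := h
  have hsupp := support_eigen _ lam x hpair
  obtain ⟨hx0, hxnn, hxineq, hxray⟩ := hpair
  set s : Finset (Fin n) := Finset.univ.filter (fun i => x i ≠ 0) with hs
  have hsne : s.Nonempty := by
    by_contra hemp
    apply hx0
    funext i
    show x i = 0
    by_contra hxi
    exact hemp ⟨i, by simp [hs, hxi]⟩
  set σ : ℝ := ∑ j, x j with hσ
  have hσpos : 0 < σ := by
    obtain ⟨i, hi⟩ := hsne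
    have hxi : x i ≠ 0 := (Finset.mem_filter.mp hi).2
    have hxipos : 0 < x i := lt_of_le_of_ne (hxnn i) (Ne.symm hxi)
    calc (0:ℝ) < x i := hxipos
      _ ≤ σ := Finset.single_le_sum (fun j _ => hxnn j) (Finset.mem_univ i)
  have heq : ∀ i ∈ s, (lam + 1) * x i = σ := by
    intro i hi
    have hxi : x i ≠ 0 := (Finset.mem_filter.mp hi).2
    have := hsupp i hxi
    rw [mulVec_top] at this
    have : σ - x i = lam * x i := this
    linarith
  have hsum : (lam + 1) * (∑ i ∈ s, x i) = s.card * σ := by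
    rw [Finset.mul_sum, Finset.sum_congr rfl heq]
    simp [mul_comm]
  have hss : ∑ i ∈ s, x i = σ := by
    rw [hσ]
    apply Finset.sum_subset (Finset.subset_univ s)
    intro i _ hi
    by_contra hxi
    exact hi (by simp [hs, hxi])
  rw [hss] at hsum
  have hlam : lam + 1 = s.card := by
    exact mul_right_cancel₀ (ne_of_gt hσpos) hsum
  have hcard : s.card ≤ n := by simpa using Finset.card_le_univ s
  exact ⟨s.card, Finset.card_pos.mpr hsne, hcard, by linarith⟩

lemma top_pareto_nm1 (hn : 1 ≤ n) :
    ((n : ℝ) - 1) ∈ distParetoSet (⊤ : SimpleGraph (Fin n)) := by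
  refine ⟨fun _ => 1, ?_, fun i => zero_le_one, ?_, ?_⟩
  · intro h
    have := congr_fun h ⟨0, hn⟩
    simp at this
  · intro i
    rw [mulVec_top]
    simp
  · have hmv : ∀ i, (distMatrix (⊤ : SimpleGraph (Fin n))).mulVec (fun _ => 1) i
        = (n : ℝ) - 1 := by
      intro i
      rw [mulVec_top]
      simp
    have hq : (fun _ => (1:ℝ)) ⬝ᵥ (distMatrix (⊤ : SimpleGraph (Fin n))).mulVec (fun _ => 1)
        = n * ((n:ℝ) - 1) := by
      show ∑ i : Fin n, 1 * (distMatrix (⊤ : SimpleGraph (Fin n))).mulVec (fun _ => 1) i = _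
      simp only [one_mul, hmv]
      rw [Finset.sum_const, Finset.card_univ, Fintype.card_fin, nsmul_eq_mul]
    have hd : (fun _ => (1:ℝ)) ⬝ᵥ (fun (_ : Fin n) => (1:ℝ)) = (n:ℝ) := by
      simp [dotProduct]
    rw [hq, hd]
    have hnpos : (0:ℝ) < n := by exact_mod_cast hn
    field_simp

lemma top_pareto_nm2 (hn : 3 ≤ n) :
    ((n : ℝ) - 2) ∈ distParetoSet (⊤ : SimpleGraph (Fin n)) := by
  have h0n : 0 < n := by omega
  have h1n : 1 < n := by omega
  set v0 : Fin n := ⟨0, h0n⟩ with hv0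
  set x : Fin n → ℝ := fun i => if i = v0 then 0 else 1 with hx
  have hsum : ∑ j, x j = (n:ℝ) - 1 := by
    rw [hx]
    have : ∀ j : Fin n, (if j = v0 then (0:ℝ) else 1) = 1 - (if j = v0 then 1 else 0) := by
      intro j
      by_cases hj : j = v0 <;> simp [hj]
    rw [Finset.sum_congr rfl (fun j _ => this j), Finset.sum_sub_distrib]
    simp
  have hmv : ∀ i, (distMatrix (⊤ : SimpleGraph (Fin n))).mulVec x i = ((n:ℝ) - 1) - x i := by
    intro i
    rw [mulVec_top, hsum]
  have hxnn : ∀ i, 0 ≤ x i := by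
    intro i
    rw [hx]
    by_cases hi : i = v0 <;> simp [hi]
  set i1 : Fin n := ⟨1, h1n⟩ with hi1
  have hi1v0 : i1 ≠ v0 := by
    rw [hi1, hv0]
    intro h
    simpa using congr_arg Fin.val h
  refine ⟨x, ?_, hxnn, ?_, ?_⟩
  · intro h
    have := congr_fun h i1
    rw [hx] at this
    simp [hi1v0] at this
  · intro i
    rw [hmv i, hx]
    by_cases hi : i = v0
    · simp [hi]
      push_cast
      linarith [show (3:ℝ) ≤ n by exact_mod_cast hn]
    · simp [hi]
      linarith
  · have hq : x ⬝ᵥ (distMatrix (⊤ : SimpleGraph (Fin n))).mulVec x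
        = ((n:ℝ) - 1) * ((n:ℝ) - 2) := by
      show ∑ i, x i * (distMatrix (⊤ : SimpleGraph (Fin n))).mulVec x i = _
      have : ∀ i : Fin n, x i * (distMatrix (⊤ : SimpleGraph (Fin n))).mulVec x i
          = (if i = v0 then (0:ℝ) else (n:ℝ) - 2) := by
        intro i
        rw [hmv i, hx]
        by_cases hi : i = v0 <;> simp [hi] <;> try ring
      rw [Finset.sum_congr rfl (fun i _ => this i)]
      have : ∀ i : Fin n, (if i = v0 then (0:ℝ) else (n:ℝ)-2)
          = ((n:ℝ)-2) - (if i = v0 then (n:ℝ)-2 else 0) := by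
        intro i
        by_cases hi : i = v0 <;> simp [hi]
      rw [Finset.sum_congr rfl (fun i _ => this i), Finset.sum_sub_distrib]
      simp
      ring
    have hd : x ⬝ᵥ x = (n:ℝ) - 1 := by
      show ∑ i, x i * x i = _
      have : ∀ i : Fin n, x i * x i = x i := by
        intro i
        rw [hx]
        by_cases hi : i = v0 <;> simp [hi]
      rw [Finset.sum_congr rfl (fun i _ => this i), hsum]
    rw [hq, hd]
    have : (n:ℝ) - 1 ≠ 0 := by
      have : (3:ℝ) ≤ n := by exact_mod_cast hn
      linarith
    field_simp

lemma exists_adj (G : SimpleGraph (Fin n)) (hG : G.Connected) {v w : Fin n} (hvw : v ≠ w) :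
    ∃ u, G.Adj v u := by
  obtain ⟨p⟩ := hG.preconnected v w
  cases p with
  | nil => exact absurd rfl hvw
  | cons h _ => exact ⟨_, h⟩

lemma top_rho (hn : 3 ≤ n) {ρ1 ρ2 : ℝ}
    (hρ1 : IsKthLargest (distParetoSet (⊤ : SimpleGraph (Fin n))) 1 ρ1)
    (hρ2 : IsKthLargest (distParetoSet (⊤ : SimpleGraph (Fin n))) 2 ρ2) :
    ρ1 = (n:ℝ) - 1 ∧ ρ2 = (n:ℝ) - 2 := by
  have hfin := pareto_finite (distMatrix (⊤ : SimpleGraph (Fin n)))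
  have hfin' : (distParetoSet (⊤ : SimpleGraph (Fin n))).Finite := hfin
  have hmax : ∀ lam ∈ distParetoSet (⊤ : SimpleGraph (Fin n)), lam ≤ (n:ℝ) - 1 := by
    intro lam hlam
    obtain ⟨k, hk1, hkn, rfl⟩ := top_pareto_form lam hlam
    have : (k:ℝ) ≤ n := by exact_mod_cast hkn
    linarith
  have h1 := isKthLargest_one_of_max (top_pareto_nm1 (by omega)) hmax
  have hr1 : ρ1 = (n:ℝ) - 1 := kth_unique hfin' hρ1 h1
  have hset : {x ∈ distParetoSet (⊤ : SimpleGraph (Fin n)) | (n:ℝ) - 2 < x}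
      = {(n:ℝ) - 1} := by
    ext lam
    simp only [Set.mem_setOf_eq, Set.mem_singleton_iff]
    constructor
    · rintro ⟨hlam, hgt⟩
      obtain ⟨k, hk1, hkn, rfl⟩ := top_pareto_form lam hlam
      have h1 : ((n:ℝ)) - 1 < (k:ℝ) := by linarith
      have h2 : (k:ℝ) ≤ n := by exact_mod_cast hkn
      have : k = n := by
        have : (n:ℝ) - 1 < k := h1
        have hkgt : n - 1 < k := by
          have hncast : ((n - 1 : ℕ) : ℝ) < k := by
            push_cast [Nat.cast_sub (by omega : 1 ≤ n)]
            linarith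
          exact_mod_cast hncast
        omega
      rw [this]
    · rintro rfl
      exact ⟨top_pareto_nm1 (by omega), by linarith⟩
  have h2 : IsKthLargest (distParetoSet (⊤ : SimpleGraph (Fin n))) 2 ((n:ℝ) - 2) := by
    refine ⟨top_pareto_nm2 hn, ?_⟩
    rw [hset]
    simp
  exact ⟨hr1, kth_unique hfin' hρ2 h2⟩

end Stmt10Aux

namespace Stmt10Aux

variable {n : ℕ}


lemma arith0 {N μ1 μ2 t : ℝ} (hN : 3 ≤ N) (hμ1ge : N - 1 ≤ μ1) (htnn : 0 ≤ t)
    (htN : N * t ≤ 1) (hμ2low : μ1 * (1 - 2*t) ≤ μ2 * (1 - t)) :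
    0 < μ2 ∧ μ1 * (N - 2) ≤ μ2 * (N - 1) := by
  have ht13 : t ≤ 1/3 := by nlinarith
  have hμ1pos : 0 < μ1 := by linarith
  constructor
  · nlinarith
  · nlinarith [mul_le_mul_of_nonneg_right hμ2low (by linarith : (0:ℝ) ≤ N - 1)]

lemma arith1 {N μ1 μ2 ρ2 t : ℝ} (hN : 3 ≤ N) (hμ1ge : N - 1 ≤ μ1) (htnn : 0 ≤ t)
    (htN : N * t ≤ 1) (hμ2low : μ1 * (1 - 2*t) ≤ μ2 * (1 - t))
    (hkey : μ1 * (N - 2) ≤ μ2 * (N - 1)) (hμ2ρ2 : μ2 ≤ ρ2)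
    (heqx : μ1 * (N - 2) = ρ2 * (N - 1)) :
    μ2 * (N - 1) = μ1 * (N - 2) ∧ N * t = 1 ∧ μ1 * (1 - 2*t) = μ2 * (1 - t) := by
  have hμ1pos : 0 < μ1 := by linarith
  have hNm1 : (0:ℝ) < N - 1 := by linarith
  have hmul : μ2 * (N - 1) ≤ ρ2 * (N - 1) := mul_le_mul_of_nonneg_right hμ2ρ2 hNm1.le
  have h1 : μ2 * (N - 1) = μ1 * (N - 2) := le_antisymm (by linarith) hkey
  have ht13 : t ≤ 1/3 := by nlinarith
  have h2 : N * t = 1 := by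
    nlinarith [mul_le_mul_of_nonneg_right hμ2low (by linarith : (0:ℝ) ≤ N - 1)]
  have h3 : μ1 * (1 - 2*t) = μ2 * (1 - t) := by nlinarith
  exact ⟨h1, h2, h3⟩

lemma arith2 {N μ1 μ2 : ℝ} (h1 : μ1 - μ2 = 1) (h2 : μ2 * (N-1) = μ1 * (N-2)) :
    μ1 = N - 1 := by
  have h3 : μ2 = μ1 - 1 := by linarith
  rw [h3] at h2
  ring_nf at h2
  linarith

lemma sq_eq_of_le {a b : ℝ} (h : b * b = a * a) (h1 : 0 ≤ a) (h2 : a ≤ b) : b = a := by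
  nlinarith

set_option maxHeartbeats 1000000 in
lemma main_facts (hn : 3 ≤ n) (G : SimpleGraph (Fin n)) (hG : G.Connected)
    (ρ1 ρ2 : ℝ)
    (hρ1 : IsKthLargest (distParetoSet G) 1 ρ1)
    (hρ2 : IsKthLargest (distParetoSet G) 2 ρ2) :
    ρ1 * ((n:ℝ) - 2) ≤ ρ2 * ((n:ℝ) - 1) ∧ 0 < ρ2 ∧ ρ2 < ρ1 ∧
      (ρ1 * ((n:ℝ) - 2) = ρ2 * ((n:ℝ) - 1) → G = ⊤) := by
  classical
  set D := distMatrix G with hD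
  have hsym : ∀ i j, D i j = D j i := fun i j => distMatrix_symm i j
  have hnn : ∀ i j, 0 ≤ D i j := fun i j => distMatrix_nonneg i j
  have hN : (3:ℝ) ≤ (n:ℝ) := by exact_mod_cast hn
  have h0n : 0 < n := by omega
  have h1n : 1 < n := by omega
  have hfin : (distParetoSet G).Finite := pareto_finite D
  -- global maximizer
  obtain ⟨μ1, x, hpair1, hxnn, hx1, -, heig0, hglob0⟩ :=
    pareto_of_S D hsym hnn Set.univ ⟨0, h0n⟩ trivial
  have heig : ∀ i, D.mulVec x i = μ1 * x i := fun i => heig0 i trivial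
  have hglob : ∀ y : Fin n → ℝ, y ⬝ᵥ D.mulVec y ≤ μ1 * (y ⬝ᵥ y) :=
    fun y => hglob0 y (fun i hi => absurd trivial hi)
  have hq1 : x ⬝ᵥ D.mulVec x = μ1 := by
    show ∑ i, x i * D.mulVec x i = μ1
    have : ∀ i : Fin n, x i * D.mulVec x i = μ1 * (x i * x i) := by
      intro i
      rw [heig i]
      ring
    rw [Finset.sum_congr rfl (fun i _ => this i), ← Finset.mul_sum]
    have : ∑ i, x i * x i = 1 := hx1
    rw [this, mul_one]
  -- lower bound on μ1
  have hrowsum_ge : ∀ i, ((n:ℝ) - 1) ≤ ∑ j, D i j := by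
    intro i
    have hle : ∀ j : Fin n, (if j = i then (0:ℝ) else 1) ≤ D i j := by
      intro j
      by_cases hj : j = i
      · subst hj
        simp [hD, distMatrix_diag]
      · simp only [if_neg hj]
        exact distMatrix_one_le hG (Ne.symm hj)
    calc ((n:ℝ) - 1) = ∑ j : Fin n, (if j = i then (0:ℝ) else 1) := by
          have : ∀ j : Fin n, (if j = i then (0:ℝ) else 1) = 1 - (if j = i then 1 else 0) := by
            intro j
            by_cases hj : j = i <;> simp [hj]
          rw [Finset.sum_congr rfl (fun j _ => this j), Finset.sum_sub_distrib]
          simp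
      _ ≤ ∑ j, D i j := Finset.sum_le_sum (fun j _ => hle j)
  have hμ1ge : (n:ℝ) - 1 ≤ μ1 := by
    have hones := hglob (fun _ => 1)
    have hq : (fun _ => (1:ℝ)) ⬝ᵥ D.mulVec (fun _ => 1) = ∑ i, ∑ j, D i j := by
      show ∑ i : Fin n, 1 * (∑ j, D i j * 1) = _
      apply Finset.sum_congr rfl
      intro i _
      simp
    have hd : (fun _ => (1:ℝ)) ⬝ᵥ (fun (_ : Fin n) => (1:ℝ)) = (n:ℝ) := by
      simp [dotProduct]
    rw [hq, hd] at hones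
    have hsum : (n:ℝ) * ((n:ℝ) - 1) ≤ ∑ i : Fin n, ∑ j, D i j := by
      calc (n:ℝ) * ((n:ℝ) - 1) = ∑ _i : Fin n, ((n:ℝ) - 1) := by
            rw [Finset.sum_const, Finset.card_univ, Fintype.card_fin, nsmul_eq_mul]
        _ ≤ ∑ i : Fin n, ∑ j, D i j := Finset.sum_le_sum (fun i _ => hrowsum_ge i)
    have hnpos : (0:ℝ) < n := by linarith
    nlinarith
  have hμ1pos : 0 < μ1 := by linarith
  -- ρ1 = μ1
  have hmax1 : ∀ lam ∈ distParetoSet G, lam ≤ μ1 := by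
    rintro lam ⟨z, hz⟩
    have hz0 : z ≠ 0 := hz.1
    have hzpos : 0 < z ⬝ᵥ z := dot_self_pos hz0
    have := hglob z
    rw [hz.2.2.2, div_le_iff₀ hzpos]
    linarith
  have hρ1μ : ρ1 = μ1 :=
    kth_unique hfin hρ1 (isKthLargest_one_of_max ⟨x, hpair1⟩ hmax1)
  obtain ⟨h21, hle2⟩ := kth2_facts hfin hρ1 hρ2
  -- argmin coordinate
  obtain ⟨v, -, hv⟩ := Finset.exists_min_image Finset.univ x ⟨⟨0, h0n⟩, Finset.mem_univ _⟩
  have hvmin : ∀ i, x v ≤ x i := fun i => hv i (Finset.mem_univ i)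
  set t := x v * x v with ht
  have htnn : 0 ≤ t := mul_self_nonneg _
  have htN : (n:ℝ) * t ≤ 1 := by
    have hterm : ∀ i : Fin n, t ≤ x i * x i := by
      intro i
      have := hvmin i
      have := hxnn v
      nlinarith
    calc (n:ℝ) * t = ∑ _i : Fin n, t := by
          rw [Finset.sum_const, Finset.card_univ, Fintype.card_fin, nsmul_eq_mul]
      _ ≤ ∑ i, x i * x i := Finset.sum_le_sum (fun i _ => hterm i)
      _ = 1 := hx1
  -- second maximizer avoiding v
  set w : Fin n := if v = ⟨0, h0n⟩ then ⟨1, h1n⟩ else ⟨0, h0n⟩ with hw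
  have hwv : w ≠ v := by
    rw [hw]
    by_cases hcase : v = ⟨0, h0n⟩
    · rw [if_pos hcase, hcase]
      intro h
      simpa using congr_arg Fin.val h
    · rw [if_neg hcase]
      exact fun h => hcase h.symm
  have hwS : w ∈ ({v}ᶜ : Set (Fin n)) := by simpa using hwv
  obtain ⟨μ2, y, hpair2, hynn, hy1, hyS, heig2, hmax2⟩ :=
    pareto_of_S D hsym hnn ({v}ᶜ : Set (Fin n)) w hwS
  have hyv : y v = 0 := hyS v (by simp)
  have hq2 : y ⬝ᵥ D.mulVec y = μ2 := by
    have := hpair2.2.2.2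
    rw [hy1, div_one] at this
    exact this.symm
  -- x' : x with v-th coordinate removed
  set x' : Fin n → ℝ := x - (x v) • (Pi.single v (1:ℝ) : Fin n → ℝ) with hx'
  have hx'S : ∀ i, i ∉ ({v}ᶜ : Set (Fin n)) → x' i = 0 := by
    intro i hi
    have : i = v := by simpa using hi
    subst this
    simp [hx']
  have hsingle_dot : (Pi.single v (1:ℝ)) ⬝ᵥ x = x v := by
    rw [single_dotProduct, one_mul]
  have hdot_single : x ⬝ᵥ (Pi.single v (1:ℝ)) = x v := by
    rw [dotProduct_single, mul_one]
  have hss : (Pi.single v (1:ℝ)) ⬝ᵥ (Pi.single v (1:ℝ)) = 1 := by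
    rw [single_dotProduct, one_mul, Pi.single_eq_same]
  have hx'dot : x' ⬝ᵥ x' = 1 - t := by
    rw [hx']
    simp only [sub_dotProduct, dotProduct_sub, smul_dotProduct,
      dotProduct_smul, smul_eq_mul]
    rw [hsingle_dot, hdot_single, hss, hx1]
    ring
  have hDsingle : ∀ i, D.mulVec (Pi.single v (1:ℝ)) i = D i v := by
    intro i
    show ∑ j, D i j * (Pi.single v (1:ℝ) : Fin n → ℝ) j = D i v
    rw [Finset.sum_eq_single v]
    · simp
    · intro j _ hj
      simp [Pi.single_eq_of_ne hj]
    · intro h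
      exact absurd (Finset.mem_univ v) h
  have hsDx : (Pi.single v (1:ℝ)) ⬝ᵥ D.mulVec x = μ1 * x v := by
    rw [single_dotProduct, one_mul, heig v]
  have hxDs : x ⬝ᵥ D.mulVec (Pi.single v (1:ℝ)) = μ1 * x v := by
    rw [dot_mulVec_comm D hsym, hsDx]
  have hsDs : (Pi.single v (1:ℝ)) ⬝ᵥ D.mulVec (Pi.single v (1:ℝ)) = 0 := by
    rw [single_dotProduct, one_mul, hDsingle v, hD, distMatrix_diag]
  have hq' : x' ⬝ᵥ D.mulVec x' = μ1 * (1 - 2*t) := by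
    rw [hx']
    rw [Matrix.mulVec_sub, Matrix.mulVec_smul]
    simp only [sub_dotProduct, dotProduct_sub, smul_dotProduct,
      dotProduct_smul, smul_eq_mul]
    rw [hq1, hsDx, hxDs, hsDs]
    ring
  have hμ2low : μ1 * (1 - 2*t) ≤ μ2 * (1 - t) := by
    have := hmax2 x' hx'S
    rw [hq', hx'dot] at this
    exact this
  have hμ2le : μ2 ≤ μ1 := hmax1 μ2 ⟨y, hpair2⟩
  have hμ2lt : μ2 < μ1 := by
    rcases lt_or_eq_of_le hμ2le with h | h
    · exact h
    · exfalso
      have hq2' : y ⬝ᵥ D.mulVec y = μ1 := by rw [hq2, h]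
      have heigy : ∀ i, i ∈ Set.univ → D.mulVec y i = μ1 * y i :=
        eigen_of_max D hsym Set.univ μ1 y hy1 (fun i hi => absurd trivial hi) hq2'
          (fun z hz => hglob z)
      obtain ⟨j, hj⟩ := Function.ne_iff.mp hpair2.1
      have hyj : 0 < y j := lt_of_le_of_ne (hynn j) (Ne.symm (by simpa using hj))
      have hjv : j ≠ v := by
        intro h
        rw [h, hyv] at hyj
        exact lt_irrefl 0 hyj
      have hlow : D v j * y j ≤ D.mulVec y v := by
        show D v j * y j ≤ ∑ k, D v k * y k
        exact Finset.single_le_sum (f := fun k => D v k * y k)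
          (fun k _ => mul_nonneg (hnn v k) (hynn k)) (Finset.mem_univ j)
      have h1d : (1:ℝ) ≤ D v j := distMatrix_one_le hG (Ne.symm hjv)
      have : D.mulVec y v = 0 := by rw [heigy v trivial, hyv, mul_zero]
      nlinarith
  have hμ2ρ2 : μ2 ≤ ρ2 := by
    apply hle2 μ2 ⟨y, hpair2⟩
    rw [hρ1μ]
    exact ne_of_lt hμ2lt
  -- positivity of ρ2
  have ht13 : t ≤ 1/3 := by nlinarith [htN, hN, htnn]
  have h2t : 0 < 1 - 2*t := by linarith
  have h1t : 0 < 1 - t := by linarith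
  obtain ⟨hμ2pos, hkey⟩ := arith0 hN hμ1ge htnn htN hμ2low
  have hρ2pos : 0 < ρ2 := lt_of_lt_of_le hμ2pos hμ2ρ2
  have hineq : ρ1 * ((n:ℝ) - 2) ≤ ρ2 * ((n:ℝ) - 1) := by
    rw [hρ1μ]
    calc μ1 * ((n:ℝ) - 2) ≤ μ2 * ((n:ℝ) - 1) := hkey
      _ ≤ ρ2 * ((n:ℝ) - 1) := mul_le_mul_of_nonneg_right hμ2ρ2 (by linarith)
  refine ⟨hineq, hρ2pos, h21, ?_⟩
  intro heqx
  rw [hρ1μ] at heqx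
  -- forced equalities
  obtain ⟨hμ2eq, htone, heq2⟩ := arith1 hN hμ1ge htnn htN hμ2low hkey hμ2ρ2 heqx
  -- x is constant
  have hsq : ∀ i, x i * x i = t := by
    have hsum0 : ∑ i, (x i * x i - t) = 0 := by
      rw [Finset.sum_sub_distrib]
      have h1 : ∑ i, x i * x i = 1 := hx1
      have h2 : ∑ _i : Fin n, t = (n:ℝ) * t := by
        rw [Finset.sum_const, Finset.card_univ, Fintype.card_fin, nsmul_eq_mul]
      rw [h1, h2, htone, sub_self]
    intro i
    have hterm : ∀ j ∈ Finset.univ, (0:ℝ) ≤ x j * x j - t := by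
      intro j _
      have h1 := mul_le_mul (hvmin j) (hvmin j) (hxnn v) (le_trans (hxnn v) (hvmin j))
      rw [ht]
      linarith
    have := (Finset.sum_eq_zero_iff_of_nonneg hterm).mp hsum0 i (Finset.mem_univ i)
    linarith
  have htpos : 0 < t := by
    rcases lt_or_ge 0 t with h | h
    · exact h
    · exfalso
      have : (n:ℝ) * t ≤ 0 := mul_nonpos_of_nonneg_of_nonpos (by linarith) h
      linarith
  have hxvpos : 0 < x v := by
    rcases lt_or_eq_of_le (hxnn v) with h | h
    · exact h
    · exfalso
      have : t = 0 := by rw [ht, ← h, mul_zero]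
      linarith
  have hconst : ∀ i, x i = x v := by
    intro i
    apply sq_eq_of_le _ (hxnn v) (hvmin i)
    rw [← ht, hsq i]
  -- row sums all equal μ1
  have hrowsum : ∀ i, (∑ j, D i j) = μ1 := by
    intro i
    have h1 : ∑ j, D i j * x j = μ1 * x i := heig i
    have h2 : ∑ j, D i j * x j = (∑ j, D i j) * x v := by
      rw [Finset.sum_mul]
      apply Finset.sum_congr rfl
      intro j _
      rw [hconst j]
    rw [h2, hconst i] at h1
    exact mul_right_cancel₀ (ne_of_gt hxvpos) h1
  -- x' is an eigenvector on {v}ᶜ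
  have hq'eq : x' ⬝ᵥ D.mulVec x' = μ2 * (x' ⬝ᵥ x') := by
    rw [hq', hx'dot]
    linarith
  set c : ℝ := Real.sqrt (1 - t) with hc
  have hcpos : 0 < c := Real.sqrt_pos.mpr h1t
  have hcc : c * c = 1 - t := Real.mul_self_sqrt h1t.le
  set z : Fin n → ℝ := c⁻¹ • x' with hz
  have hzS : ∀ i, i ∉ ({v}ᶜ : Set (Fin n)) → z i = 0 := by
    intro i hi
    rw [hz]
    simp [hx'S i hi]
  have hz1 : z ⬝ᵥ z = 1 := by
    rw [hz, smul_dotProduct, dotProduct_smul, smul_eq_mul, smul_eq_mul,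
      hx'dot, ← mul_assoc, ← mul_inv, hcc]
    field_simp
  have hzq : z ⬝ᵥ D.mulVec z = μ2 := by
    rw [hz, Matrix.mulVec_smul, smul_dotProduct, dotProduct_smul,
      smul_eq_mul, smul_eq_mul, hq'eq, hx'dot, ← mul_assoc, ← mul_inv, hcc]
    field_simp
  have heigz := eigen_of_max D hsym ({v}ᶜ : Set (Fin n)) μ2 z hz1 hzS hzq hmax2
  have heigx' : ∀ i, i ≠ v → D.mulVec x' i = μ2 * x' i := by
    intro i hiv
    have hiS : i ∈ ({v}ᶜ : Set (Fin n)) := by simpa using hiv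
    have := heigz i hiS
    rw [hz, Matrix.mulVec_smul] at this
    have h2 : c⁻¹ * D.mulVec x' i = μ2 * (c⁻¹ * x' i) := this
    have h2' : c⁻¹ * D.mulVec x' i = c⁻¹ * (μ2 * x' i) := by rw [h2]; ring
    exact mul_left_cancel₀ (inv_ne_zero (ne_of_gt hcpos)) h2' 
  -- distances to v are all μ1 - μ2
  have hDiv : ∀ i, i ≠ v → D i v = μ1 - μ2 := by
    intro i hiv
    have h1 : D.mulVec x' i = D.mulVec x i - x v * D i v := by
      rw [hx', Matrix.mulVec_sub, Matrix.mulVec_smul]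
      show D.mulVec x i - (x v) • D.mulVec (Pi.single v (1:ℝ)) i = _
      rw [hDsingle i]
      simp
    have h2 : x' i = x v := by
      rw [hx']
      show x i - (x v) • (Pi.single v (1:ℝ) : Fin n → ℝ) i = x v
      rw [Pi.single_eq_of_ne hiv]
      rw [hconst i]
      simp
    have h3 := heigx' i hiv
    rw [h1, h2, heig i, hconst i] at h3
    have h4 : x v * (μ1 - D i v) = x v * μ2 := by linear_combination h3
    have h5 := mul_left_cancel₀ (ne_of_gt hxvpos) h4
    linarith
  -- v has a neighbor, so μ1 - μ2 = 1
  obtain ⟨u, hu⟩ := exists_adj G hG (Ne.symm hwv)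
  have huv : u ≠ v := hu.ne'
  have hDvu : D v u = 1 := by
    rw [hD]
    show ((G.dist v u : ℕ) : ℝ) = 1
    rw [SimpleGraph.dist_eq_one_iff_adj.mpr hu]
    simp
  have hμdiff : μ1 - μ2 = 1 := by
    rw [← hDiv u huv, hsym u v, hDvu]
  have hμ1val : μ1 = (n:ℝ) - 1 := arith2 hμdiff hμ2eq
  -- all distances are 1
  have hone : ∀ i j, i ≠ j → D i j = 1 := by
    intro i j hij
    have hsum0 : ∑ k, (D i k - (if k = i then (0:ℝ) else 1)) = 0 := by
      rw [Finset.sum_sub_distrib, hrowsum i, hμ1val]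
      have : ∑ k : Fin n, (if k = i then (0:ℝ) else 1) = (n:ℝ) - 1 := by
        have h : ∀ k : Fin n, (if k = i then (0:ℝ) else 1) = 1 - (if k = i then 1 else 0) := by
          intro k
          by_cases hk : k = i <;> simp [hk]
        rw [Finset.sum_congr rfl (fun k _ => h k), Finset.sum_sub_distrib]
        simp
      rw [this, sub_self]
    have hterm : ∀ k ∈ Finset.univ, (0:ℝ) ≤ D i k - (if k = i then (0:ℝ) else 1) := by
      intro k _
      by_cases hk : k = i
      · subst hk
        simp [hD, distMatrix_diag]
      · simp only [if_neg hk]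
        have := distMatrix_one_le hG (Ne.symm hk)
        rw [← hD] at this
        linarith
    have := (Finset.sum_eq_zero_iff_of_nonneg hterm).mp hsum0 j (Finset.mem_univ j)
    rw [if_neg (Ne.symm hij)] at this
    linarith
  -- conclude G = ⊤
  ext i j
  simp only [SimpleGraph.top_adj]
  constructor
  · exact fun h => h.ne
  · intro hij
    have h1 : D i j = 1 := hone i j hij
    rw [hD] at h1
    have h1' : ((G.dist i j : ℕ) : ℝ) = 1 := h1
    have h2 : G.dist i j = 1 := by exact_mod_cast h1' 
    exact SimpleGraph.dist_eq_one_iff_adj.mp h2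

end Stmt10Aux

theorem stmt10 (n : ℕ) (hn : 3 ≤ n) (G : SimpleGraph (Fin n)) (hG : G.Connected)
    (ρ1 ρ2 : ℝ)
    (hρ1 : IsKthLargest (distParetoSet G) 1 ρ1)
    (hρ2 : IsKthLargest (distParetoSet G) 2 ρ2) :
    ρ1 / ρ2 ≤ ((n : ℝ) - 1) / ((n : ℝ) - 2) ∧
    (ρ1 / ρ2 = ((n : ℝ) - 1) / ((n : ℝ) - 2) ↔ G = ⊤) := by
  obtain ⟨hineq, hρ2pos, h21, heqimp⟩ := Stmt10Aux.main_facts hn G hG ρ1 ρ2 hρ1 hρ2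
  have hN : (3:ℝ) ≤ (n:ℝ) := by exact_mod_cast hn
  have hn2 : (0:ℝ) < (n:ℝ) - 2 := by linarith
  refine ⟨?_, ?_, ?_⟩
  · rw [div_le_div_iff₀ hρ2pos hn2]
    calc ρ1 * ((n:ℝ) - 2) ≤ ρ2 * ((n:ℝ) - 1) := hineq
      _ = ((n:ℝ) - 1) * ρ2 := mul_comm _ _
  · intro heq
    apply heqimp
    rw [div_eq_div_iff (ne_of_gt hρ2pos) (ne_of_gt hn2)] at heq
    exact heq.trans (mul_comm _ _)
  · intro hG_top
    subst hG_top
    obtain ⟨hr1, hr2⟩ := Stmt10Aux.top_rho hn hρ1 hρ2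
    rw [hr1, hr2]
end
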